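/- arXiv:2005.14383 — 3 statements merged into one kernel-verified Lean document; each statement's English description precedes it below -/
import Mathlib

section
/- Let (Ω,P) be a probability space carrying {0,1}-valued random variables S1, S2, G, E such that P(S1=0)=δ1, P(S2=0)=δ2, P(S1=0, S2=0)=δ12 with δ2 ≤ δ1 < 1; G is independent of S2 with P(G=1)=(1−δ1)/(1−δ2); and E is independent of the triple (G,S1,S2) with P(E=1)=δ_FF. Define the modified states S̃1 = G·S2 on the event {E=1} and S̃1 = S1 on {E=0}, and S̃2 = S2. Then P(S̃1=0) = δ1 (the marginal of receiver 1's state is preserved), and P(S̃1=0, S̃2=0) = δ_FF·δ2 + (1−δ_FF)·δ12 = δ_FF·min(δ1,δ2) + (1−δ_FF)·δ12; equivalently, the probability that not both modified forward states are erased equals 1 − δ_FF·min(δ1,δ2) − (1−δ_FF)·δ12. -/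
open Finset
open scoped Classical

/-- Probability of an event under a probability mass function on a finite sample space. -/
noncomputable def pr {Ω : Type} [Fintype Ω] (p : Ω → ℝ) (E : Ω → Prop) : ℝ :=
  ∑ ω, if E ω then p ω else 0

lemma pr_congr {Ω : Type} [Fintype Ω] (p : Ω → ℝ) {A B : Ω → Prop}
    (h : ∀ ω, A ω ↔ B ω) : pr p A = pr p B := by
  unfold pr; exact Finset.sum_congr rfl fun ω _ => by simp [h ω]

lemma pr_of_not {Ω : Type} [Fintype Ω] (p : Ω → ℝ) {A : Ω → Prop}
    (h : ∀ ω, ¬ A ω) : pr p A = 0 :=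
  Finset.sum_eq_zero fun ω _ => if_neg (h ω)

lemma pr_split {Ω : Type} [Fintype Ω] (p : Ω → ℝ) (A Q : Ω → Prop) :
    pr p A = pr p (fun ω => A ω ∧ Q ω) + pr p (fun ω => A ω ∧ ¬ Q ω) := by
  unfold pr
  rw [← Finset.sum_add_distrib]
  exact Finset.sum_congr rfl fun ω _ => by
    by_cases hA : A ω <;> by_cases hQ : Q ω <;> simp [hA, hQ]

lemma pr_fiber {Ω α : Type} [Fintype Ω] [Fintype α]
    (p : Ω → ℝ) (X : Ω → α) (Q : α → Prop) :
    pr p (fun ω => Q (X ω)) = ∑ a, pr p (fun ω => Q a ∧ X ω = a) := by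
  unfold pr
  rw [Finset.sum_comm]
  refine Finset.sum_congr rfl fun ω _ => ?_
  rw [Finset.sum_eq_single (X ω)]
  · by_cases h : Q (X ω) <;> simp [h]
  · intro b _ hb; exact if_neg (by rintro ⟨_, h2⟩; exact hb h2.symm)
  · simp

lemma indep_ext {Ω : Type} [Fintype Ω] (p : Ω → ℝ) (E G S1 S2 : Ω → Bool)
    (hEindep : ∀ (e g s1 s2 : Bool),
      pr p (fun ω => E ω = e ∧ G ω = g ∧ S1 ω = s1 ∧ S2 ω = s2)
        = pr p (fun ω => E ω = e) *
          pr p (fun ω => G ω = g ∧ S1 ω = s1 ∧ S2 ω = s2))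
    (e : Bool) (Q : Bool → Bool → Bool → Prop) :
    pr p (fun ω => E ω = e ∧ Q (G ω) (S1 ω) (S2 ω))
      = pr p (fun ω => E ω = e) * pr p (fun ω => Q (G ω) (S1 ω) (S2 ω)) := by
  have h1 : pr p (fun ω => E ω = e ∧ Q (G ω) (S1 ω) (S2 ω))
      = ∑ t : Bool × Bool × Bool × Bool,
          pr p (fun ω => (t.1 = e ∧ Q t.2.1 t.2.2.1 t.2.2.2) ∧
            (E ω, G ω, S1 ω, S2 ω) = t) :=
    pr_fiber p (fun ω => (E ω, G ω, S1 ω, S2 ω))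
      (fun t => t.1 = e ∧ Q t.2.1 t.2.2.1 t.2.2.2)
  have h2 : pr p (fun ω => Q (G ω) (S1 ω) (S2 ω))
      = ∑ u : Bool × Bool × Bool,
          pr p (fun ω => Q u.1 u.2.1 u.2.2 ∧ (G ω, S1 ω, S2 ω) = u) :=
    pr_fiber p (fun ω => (G ω, S1 ω, S2 ω)) (fun u => Q u.1 u.2.1 u.2.2)
  rw [h1, h2, Finset.mul_sum, Fintype.sum_prod_type]
  rw [Finset.sum_eq_single e]
  · refine Finset.sum_congr rfl fun u _ => ?_
    obtain ⟨g, s1, s2⟩ := u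
    by_cases hQ : Q g s1 s2
    · rw [pr_congr p (B := fun ω => E ω = e ∧ G ω = g ∧ S1 ω = s1 ∧ S2 ω = s2)
        (fun ω => by simp [hQ, Prod.ext_iff]), hEindep,
        pr_congr p (A := fun ω => Q g s1 s2 ∧ (G ω, S1 ω, S2 ω) = (g, s1, s2))
        (B := fun ω => G ω = g ∧ S1 ω = s1 ∧ S2 ω = s2)
        (fun ω => by simp [hQ, Prod.ext_iff])]
    · rw [pr_of_not p (fun ω => by tauto), pr_of_not p (A := fun ω =>
        Q g s1 s2 ∧ (G ω, S1 ω, S2 ω) = (g, s1, s2)) (fun ω => by tauto), mul_zero]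
  · intro b _ hb
    exact Finset.sum_eq_zero fun u _ => pr_of_not p (fun ω => by tauto)
  · simp

/-- Construction of the modified broadcast channel: when both feedback links to the
transmitter are erased (event `E = true`, probability `δFF`), receiver 1's forward state
is replaced by `G · S2`. The marginal of receiver 1's state is preserved, and the
probability that both modified forward states are erased is
`δFF·δ2 + (1−δFF)·δ12 = δFF·min(δ1,δ2) + (1−δFF)·δ12`. -/
theorem modified_channel_marginals {Ω : Type} [Fintype Ω] (p : Ω → ℝ)
    (hp : ∀ ω, 0 ≤ p ω) (hsum : ∑ ω, p ω = 1)
    (S1 S2 G E : Ω → Bool) (δ1 δ2 δ12 δFF : ℝ)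
    (hδ21 : δ2 ≤ δ1) (hδ1lt : δ1 < 1)
    (hS1 : pr p (fun ω => S1 ω = false) = δ1)
    (hS2 : pr p (fun ω => S2 ω = false) = δ2)
    (hS12 : pr p (fun ω => S1 ω = false ∧ S2 ω = false) = δ12)
    (hG : pr p (fun ω => G ω = true) = (1 - δ1) / (1 - δ2))
    (hGS2indep : ∀ (g s : Bool),
      pr p (fun ω => G ω = g ∧ S2 ω = s)
        = pr p (fun ω => G ω = g) * pr p (fun ω => S2 ω = s))
    (hE : pr p (fun ω => E ω = true) = δFF)
    (hEindep : ∀ (e g s1 s2 : Bool),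
      pr p (fun ω => E ω = e ∧ G ω = g ∧ S1 ω = s1 ∧ S2 ω = s2)
        = pr p (fun ω => E ω = e) *
          pr p (fun ω => G ω = g ∧ S1 ω = s1 ∧ S2 ω = s2)) :
    let S1t : Ω → Bool := fun ω => if E ω then (G ω && S2 ω) else S1 ω
    (pr p (fun ω => S1t ω = false) = δ1) ∧
    (pr p (fun ω => S1t ω = false ∧ S2 ω = false) = δFF * δ2 + (1 - δFF) * δ12) ∧
    (pr p (fun ω => S1t ω = false ∧ S2 ω = false)
        = δFF * min δ1 δ2 + (1 - δFF) * δ12) ∧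
    (pr p (fun ω => ¬(S1t ω = false ∧ S2 ω = false))
        = 1 - (δFF * min δ1 δ2 + (1 - δFF) * δ12)) := by
  intro S1t
  have hδ2lt : δ2 < 1 := lt_of_le_of_lt hδ21 hδ1lt
  have h1δ2 : (1:ℝ) - δ2 ≠ 0 := by linarith
  have hTrue : pr p (fun _ : Ω => True) = 1 := by
    unfold pr; simpa using hsum
  have hEf : pr p (fun ω => E ω = false) = 1 - δFF := by
    have hsplit := pr_split p (fun _ : Ω => True) (fun ω => E ω = true)
    rw [hTrue] at hsplit
    have ha : pr p (fun ω : Ω => True ∧ E ω = true) = δFF := by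
      rw [pr_congr p (B := fun ω => E ω = true) (fun ω => by simp), hE]
    have hb : pr p (fun ω : Ω => True ∧ ¬ E ω = true) = pr p (fun ω => E ω = false) :=
      pr_congr p fun ω => by simp
    linarith
  have hS2t : pr p (fun ω => S2 ω = true) = 1 - δ2 := by
    have hsplit := pr_split p (fun _ : Ω => True) (fun ω => S2 ω = false)
    rw [hTrue] at hsplit
    have ha : pr p (fun ω : Ω => True ∧ S2 ω = false) = δ2 := by
      rw [pr_congr p (B := fun ω => S2 ω = false) (fun ω => by simp), hS2]
    have hb : pr p (fun ω : Ω => True ∧ ¬ S2 ω = false) = pr p (fun ω => S2 ω = true) :=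
      pr_congr p fun ω => by simp
    linarith
  have hGtt : pr p (fun ω => G ω = true ∧ S2 ω = true) = 1 - δ1 := by
    rw [hGS2indep, hG, hS2t]; field_simp
  have hGS2f : pr p (fun ω => (G ω && S2 ω) = false) = δ1 := by
    have hsplit := pr_split p (fun _ : Ω => True) (fun ω => (G ω && S2 ω) = true)
    rw [hTrue] at hsplit
    have ha : pr p (fun ω : Ω => True ∧ (G ω && S2 ω) = true) = 1 - δ1 := by
      rw [pr_congr p (B := fun ω => G ω = true ∧ S2 ω = true)
        (fun ω => by simp [Bool.and_eq_true]), hGtt]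
    have hb : pr p (fun ω : Ω => True ∧ ¬ (G ω && S2 ω) = true)
        = pr p (fun ω => (G ω && S2 ω) = false) :=
      pr_congr p fun ω => by simp
    linarith
  have k1 : pr p (fun ω => E ω = true ∧ (G ω && S2 ω) = false) = δFF * δ1 := by
    have h : pr p (fun ω => E ω = true ∧ (G ω && S2 ω) = false)
        = pr p (fun ω => E ω = true) * pr p (fun ω => (G ω && S2 ω) = false) :=
      indep_ext p E G S1 S2 hEindep true (fun g _ s2 => (g && s2) = false)
    rw [h, hE, hGS2f]
  have k2 : pr p (fun ω => E ω = false ∧ S1 ω = false) = (1 - δFF) * δ1 := by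
    have h : pr p (fun ω => E ω = false ∧ S1 ω = false)
        = pr p (fun ω => E ω = false) * pr p (fun ω => S1 ω = false) :=
      indep_ext p E G S1 S2 hEindep false (fun _ s1 _ => s1 = false)
    rw [h, hEf, hS1]
  have k3 : pr p (fun ω => E ω = true ∧ S2 ω = false) = δFF * δ2 := by
    have h : pr p (fun ω => E ω = true ∧ S2 ω = false)
        = pr p (fun ω => E ω = true) * pr p (fun ω => S2 ω = false) :=
      indep_ext p E G S1 S2 hEindep true (fun _ _ s2 => s2 = false)
    rw [h, hE, hS2]
  have k4 : pr p (fun ω => E ω = false ∧ (S1 ω = false ∧ S2 ω = false))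
      = (1 - δFF) * δ12 := by
    have h : pr p (fun ω => E ω = false ∧ (S1 ω = false ∧ S2 ω = false))
        = pr p (fun ω => E ω = false) * pr p (fun ω => S1 ω = false ∧ S2 ω = false) :=
      indep_ext p E G S1 S2 hEindep false (fun _ s1 s2 => s1 = false ∧ s2 = false)
    rw [h, hEf, hS12]
  have c1 : pr p (fun ω => S1t ω = false) = δ1 := by
    have hsplit := pr_split p (fun ω => S1t ω = false) (fun ω => E ω = true)
    have ha : pr p (fun ω => S1t ω = false ∧ E ω = true)
        = pr p (fun ω => E ω = true ∧ (G ω && S2 ω) = false) :=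
      pr_congr p fun ω => by cases h : E ω <;> simp [S1t, h]
    have hb : pr p (fun ω => S1t ω = false ∧ ¬ E ω = true)
        = pr p (fun ω => E ω = false ∧ S1 ω = false) :=
      pr_congr p fun ω => by cases h : E ω <;> simp [S1t, h]
    rw [ha, hb, k1, k2] at hsplit
    rw [hsplit]; ring
  have c2 : pr p (fun ω => S1t ω = false ∧ S2 ω = false)
      = δFF * δ2 + (1 - δFF) * δ12 := by
    have hsplit := pr_split p (fun ω => S1t ω = false ∧ S2 ω = false)
      (fun ω => E ω = true)
    have ha : pr p (fun ω => (S1t ω = false ∧ S2 ω = false) ∧ E ω = true)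
        = pr p (fun ω => E ω = true ∧ S2 ω = false) :=
      pr_congr p fun ω => by
        cases h : E ω <;> cases h2 : S2 ω <;> simp [S1t, h, h2]
    have hb : pr p (fun ω => (S1t ω = false ∧ S2 ω = false) ∧ ¬ E ω = true)
        = pr p (fun ω => E ω = false ∧ (S1 ω = false ∧ S2 ω = false)) :=
      pr_congr p fun ω => by cases h : E ω <;> simp [S1t, h, and_comm]
    rw [ha, hb, k3, k4] at hsplit
    exact hsplit
  have hmin : min δ1 δ2 = δ2 := min_eq_right hδ21
  have c3 : pr p (fun ω => S1t ω = false ∧ S2 ω = false)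
      = δFF * min δ1 δ2 + (1 - δFF) * δ12 := by rw [hmin]; exact c2
  refine ⟨c1, c2, c3, ?_⟩
  have hsplit := pr_split p (fun _ : Ω => True)
    (fun ω => S1t ω = false ∧ S2 ω = false)
  rw [hTrue] at hsplit
  have ha : pr p (fun ω : Ω => True ∧ (S1t ω = false ∧ S2 ω = false))
      = pr p (fun ω => S1t ω = false ∧ S2 ω = false) := pr_congr p fun ω => by simp
  have hb : pr p (fun ω : Ω => True ∧ ¬ (S1t ω = false ∧ S2 ω = false))
      = pr p (fun ω => ¬ (S1t ω = false ∧ S2 ω = false)) := pr_congr p fun ω => by simp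
  rw [ha, hb, c3] at hsplit
  linarith
end

section
/- Let X be an F₂-valued random variable, Z a random variable with values in a finite set, and (S1,S2) a pair of {0,1}-valued random variables with the pair (S1,S2) independent of (X,Z). Define Y1 = S1·X and Y2 = S2·X. Then H[(Y1,Y2) | (Z,S1,S2)] = P(S1=1 or S2=1)·H[X | Z]. -/
open Finset
open scoped Classical

/-- Conditional Shannon entropy `H[X | Y] = Σ_y P(Y=y) · H[X | Y=y]`
(natural logarithm), for finite-valued random variables on a finite sample space. -/
noncomputable def condEnt {Ω : Type} [Fintype Ω] {α β : Type} [Fintype α] [Fintype β]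
    (p : Ω → ℝ) (X : Ω → α) (Y : Ω → β) : ℝ :=
  ∑ y : β, pr p (fun ω => Y ω = y) *
    ∑ x : α, Real.negMulLog
      (pr p (fun ω => X ω = x ∧ Y ω = y) / pr p (fun ω => Y ω = y))

namespace ErasureAux

variable {Ω : Type} [Fintype Ω]

lemma pr_congr (p : Ω → ℝ) {E F : Ω → Prop} (h : ∀ ω, E ω ↔ F ω) :
    pr p E = pr p F :=
  Finset.sum_congr rfl fun ω _ => if_congr (h ω) rfl rfl

lemma pr_of_forall_not (p : Ω → ℝ) {E : Ω → Prop} (h : ∀ ω, ¬ E ω) : pr p E = 0 := by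
  rw [pr_congr p (F := fun _ => False) (fun ω => by simp [h ω])]; simp [pr]

lemma pr_fiber {α : Type} [Fintype α] (p : Ω → ℝ) (X : Ω → α) (E : Ω → Prop) :
    pr p E = ∑ x : α, pr p (fun ω => X ω = x ∧ E ω) := by
  unfold pr
  rw [Finset.sum_comm]
  refine Finset.sum_congr rfl fun ω _ => ?_
  by_cases h : E ω <;> simp [h]

lemma sum_zmod2 (f : ZMod 2 → ℝ) : ∑ x : ZMod 2, f x = f 0 + f 1 := by
  rw [show (Finset.univ : Finset (ZMod 2)) = {0, 1} from by decide]
  rw [Finset.sum_pair (by decide : (0 : ZMod 2) ≠ 1)]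

lemma pr_or (p : Ω → ℝ) (S1 S2 : Ω → Bool) :
    pr p (fun ω => S1 ω = true ∨ S2 ω = true)
      = pr p (fun ω => S1 ω = true ∧ S2 ω = true)
        + pr p (fun ω => S1 ω = true ∧ S2 ω = false)
        + pr p (fun ω => S1 ω = false ∧ S2 ω = true) := by
  unfold pr
  rw [← Finset.sum_add_distrib, ← Finset.sum_add_distrib]
  refine Finset.sum_congr rfl fun ω _ => ?_
  cases h1 : S1 ω <;> cases h2 : S2 ω <;> simp [h1, h2]

section Main

variable {γ : Type} [Fintype γ]
variable (p : Ω → ℝ) (X : Ω → ZMod 2) (Z : Ω → γ) (S1 S2 : Ω → Bool)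

set_option linter.unusedSectionVars false

lemma num_eq (hindep : ∀ (s1 s2 : Bool) (x : ZMod 2) (z : γ),
      pr p (fun ω => (S1 ω = s1 ∧ S2 ω = s2) ∧ X ω = x ∧ Z ω = z)
        = pr p (fun ω => S1 ω = s1 ∧ S2 ω = s2) *
          pr p (fun ω => X ω = x ∧ Z ω = z))
    (z : γ) (s1 s2 : Bool) (x : ZMod 2) :
    pr p (fun ω => X ω = x ∧ (Z ω, S1 ω, S2 ω) = (z, s1, s2))
      = pr p (fun ω => S1 ω = s1 ∧ S2 ω = s2) *
        pr p (fun ω => X ω = x ∧ Z ω = z) := by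
  rw [pr_congr p (F := fun ω => (S1 ω = s1 ∧ S2 ω = s2) ∧ X ω = x ∧ Z ω = z)
      (fun ω => by simp [Prod.ext_iff]; tauto)]
  exact hindep s1 s2 x z

lemma denom_eq (hindep : ∀ (s1 s2 : Bool) (x : ZMod 2) (z : γ),
      pr p (fun ω => (S1 ω = s1 ∧ S2 ω = s2) ∧ X ω = x ∧ Z ω = z)
        = pr p (fun ω => S1 ω = s1 ∧ S2 ω = s2) *
          pr p (fun ω => X ω = x ∧ Z ω = z))
    (z : γ) (s1 s2 : Bool) :
    pr p (fun ω => (Z ω, S1 ω, S2 ω) = (z, s1, s2))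
      = pr p (fun ω => S1 ω = s1 ∧ S2 ω = s2) * pr p (fun ω => Z ω = z) := by
  rw [pr_fiber p X (fun ω => (Z ω, S1 ω, S2 ω) = (z, s1, s2)),
      pr_fiber p X (fun ω => Z ω = z), Finset.mul_sum]
  exact Finset.sum_congr rfl fun x _ => num_eq p X Z S1 S2 hindep z s1 s2 x

lemma term_eq (hindep : ∀ (s1 s2 : Bool) (x : ZMod 2) (z : γ),
      pr p (fun ω => (S1 ω = s1 ∧ S2 ω = s2) ∧ X ω = x ∧ Z ω = z)
        = pr p (fun ω => S1 ω = s1 ∧ S2 ω = s2) *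
          pr p (fun ω => X ω = x ∧ Z ω = z))
    (z : γ) (s1 s2 : Bool) (hs : s1 = true ∨ s2 = true) :
    pr p (fun ω => (Z ω, S1 ω, S2 ω) = (z, s1, s2)) *
      ∑ a : ZMod 2, ∑ b : ZMod 2, Real.negMulLog
        (pr p (fun ω => ((if S1 ω then X ω else 0 : ZMod 2),
                         (if S2 ω then X ω else 0 : ZMod 2)) = (a, b)
            ∧ (Z ω, S1 ω, S2 ω) = (z, s1, s2)) /
         pr p (fun ω => (Z ω, S1 ω, S2 ω) = (z, s1, s2)))
    = pr p (fun ω => S1 ω = s1 ∧ S2 ω = s2) *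
      (pr p (fun ω => Z ω = z) *
        ∑ x : ZMod 2, Real.negMulLog
          (pr p (fun ω => X ω = x ∧ Z ω = z) / pr p (fun ω => Z ω = z))) := by
  have hD := denom_eq p X Z S1 S2 hindep z s1 s2
  by_cases hq : pr p (fun ω => S1 ω = s1 ∧ S2 ω = s2) = 0
  · rw [hD, hq, zero_mul, zero_mul, zero_mul]
  have hnum : ∀ x : ZMod 2,
      pr p (fun ω => X ω = x ∧ (Z ω, S1 ω, S2 ω) = (z, s1, s2))
        = pr p (fun ω => S1 ω = s1 ∧ S2 ω = s2) *
          pr p (fun ω => X ω = x ∧ Z ω = z) :=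
    fun x => num_eq p X Z S1 S2 hindep z s1 s2 x
  have hcancel : ∀ x : ZMod 2,
      pr p (fun ω => X ω = x ∧ (Z ω, S1 ω, S2 ω) = (z, s1, s2)) /
        pr p (fun ω => (Z ω, S1 ω, S2 ω) = (z, s1, s2))
      = pr p (fun ω => X ω = x ∧ Z ω = z) / pr p (fun ω => Z ω = z) := by
    intro x
    rw [hnum x, hD, mul_div_mul_left _ _ hq]
  have hinner : (∑ a : ZMod 2, ∑ b : ZMod 2, Real.negMulLog
        (pr p (fun ω => ((if S1 ω then X ω else 0 : ZMod 2),
                         (if S2 ω then X ω else 0 : ZMod 2)) = (a, b)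
            ∧ (Z ω, S1 ω, S2 ω) = (z, s1, s2)) /
         pr p (fun ω => (Z ω, S1 ω, S2 ω) = (z, s1, s2))))
      = ∑ x : ZMod 2, Real.negMulLog
          (pr p (fun ω => X ω = x ∧ Z ω = z) / pr p (fun ω => Z ω = z)) := by
    simp only [sum_zmod2]
    cases s1 <;> cases s2
    · simp at hs
    · -- s1 = false, s2 = true : Y = (0, X)
      have e00 : pr p (fun ω => ((if S1 ω then X ω else 0 : ZMod 2),
            (if S2 ω then X ω else 0 : ZMod 2)) = ((0 : ZMod 2), (0 : ZMod 2))
          ∧ (Z ω, S1 ω, S2 ω) = (z, false, true))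
          = pr p (fun ω => X ω = 0 ∧ (Z ω, S1 ω, S2 ω) = (z, false, true)) :=
        pr_congr p fun ω => by
          constructor <;> rintro ⟨h1, h2⟩ <;> simp_all [Prod.ext_iff]
      have e01 : pr p (fun ω => ((if S1 ω then X ω else 0 : ZMod 2),
            (if S2 ω then X ω else 0 : ZMod 2)) = ((0 : ZMod 2), (1 : ZMod 2))
          ∧ (Z ω, S1 ω, S2 ω) = (z, false, true))
          = pr p (fun ω => X ω = 1 ∧ (Z ω, S1 ω, S2 ω) = (z, false, true)) :=
        pr_congr p fun ω => by
          constructor <;> rintro ⟨h1, h2⟩ <;> simp_all [Prod.ext_iff]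
      have e10 : pr p (fun ω => ((if S1 ω then X ω else 0 : ZMod 2),
            (if S2 ω then X ω else 0 : ZMod 2)) = ((1 : ZMod 2), (0 : ZMod 2))
          ∧ (Z ω, S1 ω, S2 ω) = (z, false, true)) = 0 :=
        pr_of_forall_not p fun ω => by
          rintro ⟨h1, h2⟩; simp_all [Prod.ext_iff]
      have e11 : pr p (fun ω => ((if S1 ω then X ω else 0 : ZMod 2),
            (if S2 ω then X ω else 0 : ZMod 2)) = ((1 : ZMod 2), (1 : ZMod 2))
          ∧ (Z ω, S1 ω, S2 ω) = (z, false, true)) = 0 :=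
        pr_of_forall_not p fun ω => by
          rintro ⟨h1, h2⟩; simp_all [Prod.ext_iff]
      rw [e00, e01, e10, e11, hcancel 0, hcancel 1]
      simp [Real.negMulLog_zero]
    · -- s1 = true, s2 = false : Y = (X, 0)
      have e00 : pr p (fun ω => ((if S1 ω then X ω else 0 : ZMod 2),
            (if S2 ω then X ω else 0 : ZMod 2)) = ((0 : ZMod 2), (0 : ZMod 2))
          ∧ (Z ω, S1 ω, S2 ω) = (z, true, false))
          = pr p (fun ω => X ω = 0 ∧ (Z ω, S1 ω, S2 ω) = (z, true, false)) :=
        pr_congr p fun ω => by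
          constructor <;> rintro ⟨h1, h2⟩ <;> simp_all [Prod.ext_iff]
      have e10 : pr p (fun ω => ((if S1 ω then X ω else 0 : ZMod 2),
            (if S2 ω then X ω else 0 : ZMod 2)) = ((1 : ZMod 2), (0 : ZMod 2))
          ∧ (Z ω, S1 ω, S2 ω) = (z, true, false))
          = pr p (fun ω => X ω = 1 ∧ (Z ω, S1 ω, S2 ω) = (z, true, false)) :=
        pr_congr p fun ω => by
          constructor <;> rintro ⟨h1, h2⟩ <;> simp_all [Prod.ext_iff]
      have e01 : pr p (fun ω => ((if S1 ω then X ω else 0 : ZMod 2),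
            (if S2 ω then X ω else 0 : ZMod 2)) = ((0 : ZMod 2), (1 : ZMod 2))
          ∧ (Z ω, S1 ω, S2 ω) = (z, true, false)) = 0 :=
        pr_of_forall_not p fun ω => by
          rintro ⟨h1, h2⟩; simp_all [Prod.ext_iff]
      have e11 : pr p (fun ω => ((if S1 ω then X ω else 0 : ZMod 2),
            (if S2 ω then X ω else 0 : ZMod 2)) = ((1 : ZMod 2), (1 : ZMod 2))
          ∧ (Z ω, S1 ω, S2 ω) = (z, true, false)) = 0 :=
        pr_of_forall_not p fun ω => by
          rintro ⟨h1, h2⟩; simp_all [Prod.ext_iff]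
      rw [e00, e01, e10, e11, hcancel 0, hcancel 1]
      simp [Real.negMulLog_zero]
    · -- s1 = true, s2 = true : Y = (X, X)
      have e00 : pr p (fun ω => ((if S1 ω then X ω else 0 : ZMod 2),
            (if S2 ω then X ω else 0 : ZMod 2)) = ((0 : ZMod 2), (0 : ZMod 2))
          ∧ (Z ω, S1 ω, S2 ω) = (z, true, true))
          = pr p (fun ω => X ω = 0 ∧ (Z ω, S1 ω, S2 ω) = (z, true, true)) :=
        pr_congr p fun ω => by
          constructor <;> rintro ⟨h1, h2⟩ <;> simp_all [Prod.ext_iff]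
      have e11 : pr p (fun ω => ((if S1 ω then X ω else 0 : ZMod 2),
            (if S2 ω then X ω else 0 : ZMod 2)) = ((1 : ZMod 2), (1 : ZMod 2))
          ∧ (Z ω, S1 ω, S2 ω) = (z, true, true))
          = pr p (fun ω => X ω = 1 ∧ (Z ω, S1 ω, S2 ω) = (z, true, true)) :=
        pr_congr p fun ω => by
          constructor <;> rintro ⟨h1, h2⟩ <;> simp_all [Prod.ext_iff]
      have e01 : pr p (fun ω => ((if S1 ω then X ω else 0 : ZMod 2),
            (if S2 ω then X ω else 0 : ZMod 2)) = ((0 : ZMod 2), (1 : ZMod 2))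
          ∧ (Z ω, S1 ω, S2 ω) = (z, true, true)) = 0 :=
        pr_of_forall_not p fun ω => by
          rintro ⟨h1, h2⟩; simp_all [Prod.ext_iff]
      have e10 : pr p (fun ω => ((if S1 ω then X ω else 0 : ZMod 2),
            (if S2 ω then X ω else 0 : ZMod 2)) = ((1 : ZMod 2), (0 : ZMod 2))
          ∧ (Z ω, S1 ω, S2 ω) = (z, true, true)) = 0 :=
        pr_of_forall_not p fun ω => by
          rintro ⟨h1, h2⟩; simp_all [Prod.ext_iff]
      rw [e00, e01, e10, e11, hcancel 0, hcancel 1]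
      simp [Real.negMulLog_zero]
  rw [hinner, hD]
  ring

lemma term_ff (z : γ) :
    pr p (fun ω => (Z ω, S1 ω, S2 ω) = (z, false, false)) *
      ∑ a : ZMod 2, ∑ b : ZMod 2, Real.negMulLog
        (pr p (fun ω => ((if S1 ω then X ω else 0 : ZMod 2),
                         (if S2 ω then X ω else 0 : ZMod 2)) = (a, b)
            ∧ (Z ω, S1 ω, S2 ω) = (z, false, false)) /
         pr p (fun ω => (Z ω, S1 ω, S2 ω) = (z, false, false)))
    = 0 := by
  have e00 : pr p (fun ω => ((if S1 ω then X ω else 0 : ZMod 2),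
        (if S2 ω then X ω else 0 : ZMod 2)) = ((0 : ZMod 2), (0 : ZMod 2))
      ∧ (Z ω, S1 ω, S2 ω) = (z, false, false))
      = pr p (fun ω => (Z ω, S1 ω, S2 ω) = (z, false, false)) :=
    pr_congr p fun ω => by
      constructor
      · rintro ⟨h1, h2⟩; exact h2
      · intro h2; refine ⟨?_, h2⟩; simp_all [Prod.ext_iff]
  have e01 : pr p (fun ω => ((if S1 ω then X ω else 0 : ZMod 2),
        (if S2 ω then X ω else 0 : ZMod 2)) = ((0 : ZMod 2), (1 : ZMod 2))
      ∧ (Z ω, S1 ω, S2 ω) = (z, false, false)) = 0 :=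
    pr_of_forall_not p fun ω => by
      rintro ⟨h1, h2⟩; simp_all [Prod.ext_iff]
  have e10 : pr p (fun ω => ((if S1 ω then X ω else 0 : ZMod 2),
        (if S2 ω then X ω else 0 : ZMod 2)) = ((1 : ZMod 2), (0 : ZMod 2))
      ∧ (Z ω, S1 ω, S2 ω) = (z, false, false)) = 0 :=
    pr_of_forall_not p fun ω => by
      rintro ⟨h1, h2⟩; simp_all [Prod.ext_iff]
  have e11 : pr p (fun ω => ((if S1 ω then X ω else 0 : ZMod 2),
        (if S2 ω then X ω else 0 : ZMod 2)) = ((1 : ZMod 2), (1 : ZMod 2))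
      ∧ (Z ω, S1 ω, S2 ω) = (z, false, false)) = 0 :=
    pr_of_forall_not p fun ω => by
      rintro ⟨h1, h2⟩; simp_all [Prod.ext_iff]
  simp only [sum_zmod2]
  rw [e00, e01, e10, e11]
  by_cases hD : pr p (fun ω => (Z ω, S1 ω, S2 ω) = (z, false, false)) = 0
  · rw [hD]
    simp [Real.negMulLog_zero]
  · rw [div_self hD]
    simp [Real.negMulLog_zero, Real.negMulLog_one]

end Main
end ErasureAux

/-- For a pair of erasure channels `Y1 = S1·X`, `Y2 = S2·X` with states `(S1,S2)`
independent of `(X,Z)`, `H[(Y1,Y2) | (Z,S1,S2)] = P(S1=1 or S2=1) · H[X | Z]`. -/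
theorem erasure_pair_condEntropy {Ω γ : Type} [Fintype Ω] [Fintype γ]
    (p : Ω → ℝ) (hp : ∀ ω, 0 ≤ p ω) (hsum : ∑ ω, p ω = 1)
    (X : Ω → ZMod 2) (Z : Ω → γ) (S1 S2 : Ω → Bool)
    (hindep : ∀ (s1 s2 : Bool) (x : ZMod 2) (z : γ),
      pr p (fun ω => (S1 ω = s1 ∧ S2 ω = s2) ∧ X ω = x ∧ Z ω = z)
        = pr p (fun ω => S1 ω = s1 ∧ S2 ω = s2) *
          pr p (fun ω => X ω = x ∧ Z ω = z)) :
    condEnt p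
        (fun ω => ((if S1 ω then X ω else 0 : ZMod 2),
                   (if S2 ω then X ω else 0 : ZMod 2)))
        (fun ω => (Z ω, S1 ω, S2 ω))
      = pr p (fun ω => S1 ω = true ∨ S2 ω = true) * condEnt p X Z := by
  unfold condEnt
  rw [ErasureAux.pr_or p S1 S2, Finset.mul_sum]
  simp only [Fintype.sum_prod_type, Fintype.sum_bool]
  refine Finset.sum_congr rfl fun z _ => ?_
  rw [ErasureAux.term_eq p X Z S1 S2 hindep z true true (Or.inl rfl),
      ErasureAux.term_eq p X Z S1 S2 hindep z true false (Or.inl rfl),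
      ErasureAux.term_eq p X Z S1 S2 hindep z false true (Or.inr rfl),
      ErasureAux.term_ff p X Z S1 S2 z]
  ring
end

section
/- Consider random variables on a common probability space: messages W1, W2 with values in finite sets; a state process (S1[t], S2[t], F[t]) for t = 1,…,n, where S1[t], S2[t] are {0,1}-valued and F[t] takes values in a finite set, such that the n triples (S1[t],S2[t],F[t]) are i.i.d. across t and the entire state process is independent of (W1,W2). Suppose the channel inputs X[t] ∈ F₂ satisfy X[t] = f_t(W1, W2, (S1[s],S2[s],F[s])_{s<t}) for deterministic functions f_t, and define the outputs Y1[t] = S1[t]·X[t] and Y2[t] = S2[t]·X[t]. Let δ2 = P(S2[1]=0) < 1, p00 = P(S1[1]=0, S2[1]=0), and β2 = (1−p00)/(1−δ2). Then H[(Y1[t])_{t=1}^n | (W2, (S1[t],S2[t],F[t])_{t=1}^n)] ≤ β2 · H[(Y2[t])_{t=1}^n | (W2, (S1[t],S2[t],F[t])_{t=1}^n)]. -/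
open Finset
open scoped Classical

namespace EII

variable {Ω : Type} [Fintype Ω] {p : Ω → ℝ}

lemma pr_nonneg (hp : ∀ ω, 0 ≤ p ω) (E : Ω → Prop) : 0 ≤ pr p E :=
  Finset.sum_nonneg fun ω _ => by by_cases h : E ω <;> simp [h, hp ω]

lemma pr_congr {E E' : Ω → Prop} (h : ∀ ω, E ω ↔ E' ω) : pr p E = pr p E' :=
  Finset.sum_congr rfl fun ω _ => by rw [if_congr (h ω) rfl rfl]

lemma pr_mono (hp : ∀ ω, 0 ≤ p ω) {E E' : Ω → Prop} (h : ∀ ω, E ω → E' ω) :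
    pr p E ≤ pr p E' := by
  refine Finset.sum_le_sum fun ω _ => ?_
  by_cases hE : E ω
  · simp [hE, h ω hE]
  · by_cases hE' : E' ω <;> simp [hE, hE', hp ω]

lemma pr_split {β : Type} [Fintype β] (X : Ω → β) (E : Ω → Prop) :
    pr p E = ∑ b, pr p (fun ω => E ω ∧ X ω = b) := by
  unfold pr
  rw [Finset.sum_comm]
  refine Finset.sum_congr rfl fun ω _ => ?_
  by_cases hE : E ω
  · simp only [hE, true_and]
    simp [Finset.sum_ite_eq]
  · simp [hE]

lemma pr_le_one (hp : ∀ ω, 0 ≤ p ω) (hsum : ∑ ω, p ω = 1) (E : Ω → Prop) :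
    pr p E ≤ 1 := by
  rw [← hsum]
  refine Finset.sum_le_sum fun ω _ => ?_
  by_cases hE : E ω <;> simp [hE, hp ω]

lemma pr_true (hsum : ∑ ω, p ω = 1) : pr p (fun _ => True) = 1 := by
  simpa [pr] using hsum

/-- plain entropy of a finite-valued random variable -/
noncomputable def ent (p : Ω → ℝ) {β : Type} [Fintype β] (X : Ω → β) : ℝ :=
  ∑ b, Real.negMulLog (pr p (fun ω => X ω = b))

lemma negMulLog_sum_le {ι : Type*} (s : Finset ι) (f : ι → ℝ) (hf : ∀ i ∈ s, 0 ≤ f i) :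
    Real.negMulLog (∑ i ∈ s, f i) ≤ ∑ i ∈ s, Real.negMulLog (f i) := by
  have hS : 0 ≤ ∑ i ∈ s, f i := Finset.sum_nonneg hf
  have : Real.negMulLog (∑ i ∈ s, f i) = ∑ i ∈ s, f i * (-Real.log (∑ j ∈ s, f j)) := by
    rw [← Finset.sum_mul]; simp only [Real.negMulLog]; ring
  rw [this]
  refine Finset.sum_le_sum fun i hi => ?_
  rcases eq_or_lt_of_le (hf i hi) with h0 | h0
  · simp [← h0, Real.negMulLog]
  · have hle : f i ≤ ∑ j ∈ s, f j := Finset.single_le_sum hf hi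
    have : -Real.log (∑ j ∈ s, f j) ≤ -Real.log (f i) := by
      exact neg_le_neg (Real.log_le_log h0 hle)
    calc f i * (-Real.log (∑ j ∈ s, f j)) ≤ f i * (-Real.log (f i)) :=
          mul_le_mul_of_nonneg_left this (le_of_lt h0)
      _ = Real.negMulLog (f i) := by simp only [Real.negMulLog]; ring

lemma pr_comp_eq_sum {β ρ : Type} [Fintype β] (X : Ω → β) (g : β → ρ) (r : ρ) :
    pr p (fun ω => g (X ω) = r) = ∑ b ∈ univ.filter (fun b => g b = r),
      pr p (fun ω => X ω = b) := by
  rw [pr_split X (fun ω => g (X ω) = r), Finset.sum_filter]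
  refine Finset.sum_congr rfl fun b _ => ?_
  by_cases hb : g b = r
  · simp only [hb, if_true]
    refine pr_congr fun ω => ?_
    constructor
    · rintro ⟨_, h2⟩; exact h2
    · intro h2; exact ⟨by rw [h2, hb], h2⟩
  · simp only [hb, if_false]
    have : ∀ ω, (g (X ω) = r ∧ X ω = b) ↔ False := by
      intro ω; constructor
      · rintro ⟨h1, h2⟩; rw [h2] at h1; exact hb h1
      · exact False.elim
    rw [pr_congr this]; simp [pr]

lemma ent_comp_le {β ρ : Type} [Fintype β] [Fintype ρ] (hp : ∀ ω, 0 ≤ p ω)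
    (X : Ω → β) (g : β → ρ) :
    ent p (fun ω => g (X ω)) ≤ ent p X := by
  unfold ent
  have : ∀ r : ρ, Real.negMulLog (pr p (fun ω => g (X ω) = r)) ≤
      ∑ b ∈ univ.filter (fun b => g b = r), Real.negMulLog (pr p (fun ω => X ω = b)) := by
    intro r
    rw [pr_comp_eq_sum X g r]
    exact negMulLog_sum_le _ _ fun b _ => pr_nonneg hp _
  calc ∑ r, Real.negMulLog (pr p (fun ω => g (X ω) = r))
      ≤ ∑ r, ∑ b ∈ univ.filter (fun b => g b = r),
          Real.negMulLog (pr p (fun ω => X ω = b)) := Finset.sum_le_sum fun r _ => this r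
    _ = ∑ b, Real.negMulLog (pr p (fun ω => X ω = b)) := by
        rw [Finset.sum_fiberwise univ g (fun b => Real.negMulLog (pr p (fun ω => X ω = b)))]

lemma ent_congr {β ρ : Type} [Fintype β] [Fintype ρ] (hp : ∀ ω, 0 ≤ p ω)
    {X : Ω → β} {X' : Ω → ρ} (g : β → ρ) (h : ρ → β)
    (hg : ∀ ω, X' ω = g (X ω)) (hh : ∀ ω, X ω = h (X' ω)) :
    ent p X = ent p X' := by
  have h1 : ent p X' ≤ ent p X := by
    have : X' = fun ω => g (X ω) := funext hg
    rw [this]; exact ent_comp_le hp X g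
  have h2 : ent p X ≤ ent p X' := by
    have : X = fun ω => h (X' ω) := funext hh
    rw [this]; exact ent_comp_le hp X' h
  linarith

end EII
namespace EII

variable {Ω : Type} [Fintype Ω] {p : Ω → ℝ}

lemma mul_negMulLog_div {a c : ℝ} (ha : 0 ≤ a) (hac : a ≤ c) :
    c * Real.negMulLog (a / c) = Real.negMulLog a + a * Real.log c := by
  rcases eq_or_lt_of_le (le_trans ha hac) with hc | hc
  · have ha0 : a = 0 := le_antisymm (by rw [hc]; exact hac) ha
    simp [← hc, ha0]
  · rcases eq_or_lt_of_le ha with ha0 | ha0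
    · simp [← ha0]
    · have hc0 : c ≠ 0 := ne_of_gt hc
      have ha0' : a ≠ 0 := ne_of_gt ha0
      simp only [Real.negMulLog, Real.log_div ha0' hc0]
      field_simp
      ring

lemma pr_pair_eq {α β : Type} (X : Ω → α) (Y : Ω → β) (x : α) (y : β) :
    pr p (fun ω => X ω = x ∧ Y ω = y) = pr p (fun ω => (X ω, Y ω) = (x, y)) :=
  pr_congr fun ω => by rw [Prod.mk.injEq]

lemma sum_pr_pair (hp : ∀ ω, 0 ≤ p ω) {α β : Type} [Fintype α] (X : Ω → α) (Y : Ω → β)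
    (y : β) : ∑ x, pr p (fun ω => X ω = x ∧ Y ω = y) = pr p (fun ω => Y ω = y) := by
  rw [pr_split X (fun ω => Y ω = y)]
  exact Finset.sum_congr rfl fun x _ => pr_congr fun ω => and_comm

lemma condEnt_eq_sub {α β : Type} [Fintype α] [Fintype β] (hp : ∀ ω, 0 ≤ p ω)
    (X : Ω → α) (Y : Ω → β) :
    condEnt p X Y = ent p (fun ω => (X ω, Y ω)) - ent p Y := by
  have key : ∀ y : β, pr p (fun ω => Y ω = y) *
      ∑ x, Real.negMulLog (pr p (fun ω => X ω = x ∧ Y ω = y) / pr p (fun ω => Y ω = y))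
      = (∑ x, Real.negMulLog (pr p (fun ω => X ω = x ∧ Y ω = y)))
        + pr p (fun ω => Y ω = y) * Real.log (pr p (fun ω => Y ω = y)) := by
    intro y
    rw [Finset.mul_sum]
    have : ∀ x : α, pr p (fun ω => Y ω = y) *
        Real.negMulLog (pr p (fun ω => X ω = x ∧ Y ω = y) / pr p (fun ω => Y ω = y))
        = Real.negMulLog (pr p (fun ω => X ω = x ∧ Y ω = y))
          + pr p (fun ω => X ω = x ∧ Y ω = y) * Real.log (pr p (fun ω => Y ω = y)) := by
      intro x
      exact mul_negMulLog_div (pr_nonneg hp _) (pr_mono hp fun ω h => h.2)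
    rw [Finset.sum_congr rfl fun x _ => this x, Finset.sum_add_distrib,
      ← Finset.sum_mul, sum_pr_pair hp X Y y]
  unfold condEnt
  rw [Finset.sum_congr rfl fun y _ => key y, Finset.sum_add_distrib]
  have h1 : ∑ y : β, ∑ x : α, Real.negMulLog (pr p (fun ω => X ω = x ∧ Y ω = y))
      = ent p (fun ω => (X ω, Y ω)) := by
    unfold ent
    rw [Fintype.sum_prod_type, Finset.sum_comm]
    exact Finset.sum_congr rfl fun x _ => Finset.sum_congr rfl fun y _ =>
      congrArg Real.negMulLog (pr_pair_eq X Y x y)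
  have h2 : ∑ y : β, pr p (fun ω => Y ω = y) * Real.log (pr p (fun ω => Y ω = y))
      = - ent p Y := by
    unfold ent
    rw [← Finset.sum_neg_distrib]
    exact Finset.sum_congr rfl fun y _ => by simp [Real.negMulLog]
  rw [h1, h2]; ring

lemma condEnt_comp_le {α α' β : Type} [Fintype α] [Fintype α'] [Fintype β]
    (hp : ∀ ω, 0 ≤ p ω) (X : Ω → α) (Y : Ω → β) (g : α → α') :
    condEnt p (fun ω => g (X ω)) Y ≤ condEnt p X Y := by
  rw [condEnt_eq_sub hp, condEnt_eq_sub hp]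
  have : ent p (fun ω => (g (X ω), Y ω)) ≤ ent p (fun ω => (X ω, Y ω)) :=
    ent_comp_le hp (fun ω => (X ω, Y ω)) (Prod.map g id)
  linarith

lemma condEnt_congrX {α α' β : Type} [Fintype α] [Fintype α'] [Fintype β]
    (hp : ∀ ω, 0 ≤ p ω) {X : Ω → α} {X' : Ω → α'} (Y : Ω → β)
    (g : α → α') (h : α' → α) (hg : ∀ ω, X' ω = g (X ω)) (hh : ∀ ω, X ω = h (X' ω)) :
    condEnt p X Y = condEnt p X' Y := by
  have h1 : condEnt p X' Y ≤ condEnt p X Y := by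
    have : X' = fun ω => g (X ω) := funext hg
    rw [this]; exact condEnt_comp_le hp X Y g
  have h2 : condEnt p X Y ≤ condEnt p X' Y := by
    have : X = fun ω => h (X' ω) := funext hh
    rw [this]; exact condEnt_comp_le hp X' Y h
  linarith

lemma condEnt_chain {α α' β : Type} [Fintype α] [Fintype α'] [Fintype β]
    (hp : ∀ ω, 0 ≤ p ω) (X : Ω → α) (Z : Ω → α') (Y : Ω → β) :
    condEnt p (fun ω => (X ω, Z ω)) Y
      = condEnt p Z Y + condEnt p X (fun ω => (Z ω, Y ω)) := by
  rw [condEnt_eq_sub hp, condEnt_eq_sub hp, condEnt_eq_sub hp]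
  have : ent p (fun ω => ((X ω, Z ω), Y ω)) = ent p (fun ω => (X ω, (Z ω, Y ω))) :=
    ent_congr hp (fun z => (z.1.1, (z.1.2, z.2))) (fun z => ((z.1, z.2.1), z.2.2))
      (fun ω => rfl) (fun ω => rfl)
  rw [this]; ring

lemma condEnt_const {α β : Type} [Fintype α] [Fintype β] (hp : ∀ ω, 0 ≤ p ω)
    (c : α) (Y : Ω → β) : condEnt p (fun _ => c) Y = 0 := by
  rw [condEnt_eq_sub hp]
  have : ent p (fun ω => ((c : α), Y ω)) = ent p Y :=
    ent_congr hp Prod.snd (fun y => (c, y)) (fun ω => rfl) (fun ω => rfl)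
  rw [this]; ring

end EII
namespace EII

variable {Ω : Type} [Fintype Ω] {p : Ω → ℝ}

lemma jensen_step {ι : Type} (s : Finset ι) (c a : ι → ℝ)
    (hc : ∀ i ∈ s, 0 ≤ c i) (ha : ∀ i ∈ s, 0 ≤ a i) (hac : ∀ i ∈ s, a i ≤ c i) :
    ∑ i ∈ s, c i * Real.negMulLog (a i / c i)
      ≤ (∑ i ∈ s, c i) * Real.negMulLog ((∑ i ∈ s, a i) / (∑ i ∈ s, c i)) := by
  rcases eq_or_lt_of_le (Finset.sum_nonneg hc) with h0 | h0
  · have hz : ∀ i ∈ s, c i = 0 := (Finset.sum_eq_zero_iff_of_nonneg hc).mp h0.symm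
    have hL : ∀ i ∈ s, c i * Real.negMulLog (a i / c i) = 0 := fun i hi => by
      rw [hz i hi]; ring
    rw [Finset.sum_congr rfl hL, Finset.sum_const_zero, ← h0]
    ring_nf
    exact le_refl _
  · set C := ∑ i ∈ s, c i with hC
    have hCne : C ≠ 0 := ne_of_gt h0
    have hJ := Real.concaveOn_negMulLog.le_map_sum (t := s) (w := fun i => c i / C)
      (p := fun i => a i / c i)
      (fun i hi => div_nonneg (hc i hi) (le_of_lt h0))
      (by rw [← Finset.sum_div]; exact div_self hCne)
      (fun i hi => Set.mem_Ici.mpr (div_nonneg (ha i hi) (hc i hi)))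
    have e1 : ∑ i ∈ s, (c i / C) • Real.negMulLog (a i / c i)
        = (∑ i ∈ s, c i * Real.negMulLog (a i / c i)) / C := by
      rw [Finset.sum_div]
      exact Finset.sum_congr rfl fun i hi => by
        simp only [smul_eq_mul]; ring
    have e2 : ∑ i ∈ s, (c i / C) • (a i / c i) = (∑ i ∈ s, a i) / C := by
      rw [Finset.sum_div]
      refine Finset.sum_congr rfl fun i hi => ?_
      rcases eq_or_lt_of_le (hc i hi) with hci | hci
      · have h' : a i ≤ 0 := by have := hac i hi; rwa [← hci] at this
        have hai : a i = 0 := le_antisymm h' (ha i hi)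
        simp [← hci, hai]
      · field_simp
        rw [smul_eq_mul, ← mul_assoc, mul_div_assoc' C (c i) C, mul_div_cancel_left₀ (c i) hCne,
          mul_div_assoc', mul_div_cancel_left₀ (a i) (ne_of_gt hci)]
    rw [e1, e2] at hJ
    calc ∑ i ∈ s, c i * Real.negMulLog (a i / c i)
        = ((∑ i ∈ s, c i * Real.negMulLog (a i / c i)) / C) * C := by field_simp
      _ ≤ Real.negMulLog ((∑ i ∈ s, a i) / C) * C :=
          mul_le_mul_of_nonneg_right hJ (le_of_lt h0)
      _ = C * Real.negMulLog ((∑ i ∈ s, a i) / C) := by ring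

lemma pr_and_comp_eq_sum {α β ρ : Type} [Fintype β] (X : Ω → α) (Y : Ω → β) (g : β → ρ)
    (x : α) (r : ρ) :
    pr p (fun ω => X ω = x ∧ g (Y ω) = r)
      = ∑ b ∈ univ.filter (fun b => g b = r), pr p (fun ω => X ω = x ∧ Y ω = b) := by
  rw [pr_split Y (fun ω => X ω = x ∧ g (Y ω) = r), Finset.sum_filter]
  refine Finset.sum_congr rfl fun b _ => ?_
  by_cases hb : g b = r
  · simp only [hb, if_true]
    refine pr_congr fun ω => ?_
    constructor
    · rintro ⟨⟨h1, _⟩, h2⟩; exact ⟨h1, h2⟩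
    · rintro ⟨h1, h2⟩; exact ⟨⟨h1, by rw [h2, hb]⟩, h2⟩
  · simp only [hb, if_false]
    have : ∀ ω, ((X ω = x ∧ g (Y ω) = r) ∧ Y ω = b) ↔ False := by
      intro ω
      constructor
      · rintro ⟨⟨_, h1⟩, h2⟩; rw [h2] at h1; exact hb h1
      · exact False.elim
    rw [pr_congr this]; simp [pr]

lemma condEnt_mono_cond {α β β' : Type} [Fintype α] [Fintype β] [Fintype β']
    (hp : ∀ ω, 0 ≤ p ω) (X : Ω → α) (Y : Ω → β) (g : β → β') :
    condEnt p X Y ≤ condEnt p X (fun ω => g (Y ω)) := by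
  unfold condEnt
  rw [← Finset.sum_fiberwise univ g (fun y => pr p (fun ω => Y ω = y) *
    ∑ x, Real.negMulLog (pr p (fun ω => X ω = x ∧ Y ω = y) / pr p (fun ω => Y ω = y)))]
  refine Finset.sum_le_sum fun y' _ => ?_
  rw [pr_comp_eq_sum Y g y']
  have hrw : ∀ x : α, pr p (fun ω => X ω = x ∧ g (Y ω) = y')
      = ∑ b ∈ univ.filter (fun b => g b = y'), pr p (fun ω => X ω = x ∧ Y ω = b) :=
    fun x => pr_and_comp_eq_sum X Y g x y'
  rw [Finset.sum_congr rfl fun x (_ : x ∈ univ) => by rw [hrw x]]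
  rw [Finset.mul_sum]
  have lhs_eq : ∑ y ∈ univ.filter (fun b => g b = y'),
      pr p (fun ω => Y ω = y) * ∑ x, Real.negMulLog
        (pr p (fun ω => X ω = x ∧ Y ω = y) / pr p (fun ω => Y ω = y))
      = ∑ x, ∑ y ∈ univ.filter (fun b => g b = y'),
          pr p (fun ω => Y ω = y) * Real.negMulLog
            (pr p (fun ω => X ω = x ∧ Y ω = y) / pr p (fun ω => Y ω = y)) := by
    rw [← Finset.sum_comm]
    exact Finset.sum_congr rfl fun y _ => Finset.mul_sum _ _ _
  rw [lhs_eq]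
  refine Finset.sum_le_sum fun x _ => ?_
  exact jensen_step _ _ _ (fun y _ => pr_nonneg hp _) (fun y _ => pr_nonneg hp _)
    (fun y _ => pr_mono hp fun ω h => h.2)

lemma condEnt_congr_cond {α β β' : Type} [Fintype α] [Fintype β] [Fintype β']
    (hp : ∀ ω, 0 ≤ p ω) (X : Ω → α) {Y : Ω → β} {Y' : Ω → β'}
    (g : β → β') (h : β' → β) (hg : ∀ ω, Y' ω = g (Y ω)) (hh : ∀ ω, Y ω = h (Y' ω)) :
    condEnt p X Y = condEnt p X Y' := by
  have h1 : condEnt p X Y ≤ condEnt p X Y' := by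
    have e : (fun ω => g (Y ω)) = Y' := funext fun ω => (hg ω).symm
    have := condEnt_mono_cond hp X Y g
    rwa [e] at this
  have h2 : condEnt p X Y' ≤ condEnt p X Y := by
    have e : (fun ω => h (Y' ω)) = Y := funext fun ω => (hh ω).symm
    have := condEnt_mono_cond hp X Y' h
    rwa [e] at this
  linarith

end EII
namespace EII

variable {Ω : Type} [Fintype Ω] {p : Ω → ℝ}

/-- truncation of a sequence strictly below time `t` -/
def trunc {σ : Type} {n : ℕ} (t : Fin n) (v : Fin n → σ) : Fin n → Option σ :=
  fun s => if s < t then some (v s) else none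

lemma trunc_isSome {σ : Type} {n : ℕ} (t : Fin n) (v : Fin n → σ) :
    ∀ s : Fin n, s < t ↔ (trunc t v s).isSome := by
  intro s
  unfold trunc
  by_cases h : s < t <;> simp [h]

lemma sum_trunc_fiber {σ : Type} [Fintype σ] [Inhabited σ] {n : ℕ} (t : Fin n)
    (q : σ → ℝ) (hq1 : ∑ x, q x = 1) (G : σ → Prop) (h' : Fin n → Option σ) :
    ∑ v : Fin n → σ,
      (if trunc t v = h' then (if G (v t) then (1:ℝ) else 0) * ∏ s, q (v s) else 0)
    = if (∀ s : Fin n, s < t ↔ (h' s).isSome) then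
        (∏ s, (h' s).elim 1 q) * (∑ x ∈ univ.filter G, q x) else 0 := by
  by_cases hR : ∀ s : Fin n, s < t ↔ (h' s).isSome
  · rw [if_pos hR]
    set w : Fin n → σ := fun s => (h' s).getD default with hw
    have hsome : ∀ s : Fin n, s < t → h' s = some (w s) := by
      intro s hs
      have := (hR s).mp hs
      rcases Option.isSome_iff_exists.mp this with ⟨x, hx⟩
      simp [hw, hx]
    have hnone : ∀ s : Fin n, ¬ s < t → h' s = none := by
      intro s hs
      by_contra hne
      exact hs ((hR s).mpr (Option.isSome_iff_ne_none.mpr hne))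
    set g : Fin n → σ → ℝ := fun s x =>
      if s < t then (if x = w s then q x else 0)
      else if s = t then (if G x then q x else 0) else q x with hg
    have key : ∀ v : Fin n → σ,
        (if trunc t v = h' then (if G (v t) then (1:ℝ) else 0) * ∏ s, q (v s) else 0)
        = ∏ s, g s (v s) := by
      intro v
      by_cases htv : trunc t v = h'
      · rw [if_pos htv]
        have hvw : ∀ s : Fin n, s < t → v s = w s := by
          intro s hs
          have h1 : trunc t v s = h' s := by rw [htv]
          rw [hsome s hs] at h1
          unfold trunc at h1
          rw [if_pos hs] at h1
          exact Option.some_injective _ h1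
        have hfac : ∀ s : Fin n, g s (v s)
            = (if s = t then (if G (v t) then (1:ℝ) else 0) else 1) * q (v s) := by
          intro s
          by_cases hs : s < t
          · have hst : s ≠ t := ne_of_lt hs
            simp [hg, hs, hvw s hs, hst]
          · by_cases hst : s = t
            · subst hst
              by_cases hG : G (v s) <;> simp [hg, hs, hG]
            · simp [hg, hs, hst]
        rw [Finset.prod_congr rfl fun s _ => hfac s, Finset.prod_mul_distrib]
        rw [Finset.prod_ite_eq' univ t (fun _ => if G (v t) then (1:ℝ) else 0)]
        simp
      · rw [if_neg htv]
        have : ∃ s : Fin n, trunc t v s ≠ h' s := by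
          by_contra hall
          push_neg at hall
          exact htv (funext hall)
        rcases this with ⟨s, hs⟩
        by_cases hlt : s < t
        · have hvw : v s ≠ w s := by
            intro heq
            apply hs
            unfold trunc
            rw [if_pos hlt, hsome s hlt, heq]
          have : g s (v s) = 0 := by simp [hg, hlt, hvw]
          exact (Finset.prod_eq_zero (Finset.mem_univ s) this).symm
        · exfalso
          apply hs
          unfold trunc
          rw [if_neg hlt, hnone s hlt]
    rw [Finset.sum_congr rfl fun v _ => key v]
    rw [← Fintype.prod_sum g]
    have colsum : ∀ s : Fin n, (∑ x, g s x)
        = (if s < t then q (w s) else 1) * (if s = t then ∑ x ∈ univ.filter G, q x else 1) := by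
      intro s
      by_cases hs : s < t
      · have hst : s ≠ t := ne_of_lt hs
        simp only [hg, hs, if_true, hst, if_false, mul_one]
        rw [Finset.sum_ite_eq' univ (w s) q]
        simp
      · by_cases hst : s = t
        · subst hst
          simp [hg, hs, Finset.sum_filter]
        · simp only [hg, hs, if_false, hst, mul_one]
          exact hq1
    rw [Finset.prod_congr rfl fun s _ => colsum s, Finset.prod_mul_distrib]
    rw [Finset.prod_ite_eq' univ t (fun _ => ∑ x ∈ univ.filter G, q x)]
    simp only [Finset.mem_univ, if_true]
    congr 1
    refine Finset.prod_congr rfl fun s _ => ?_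
    by_cases hs : s < t
    · rw [if_pos hs, hsome s hs]
      rfl
    · rw [if_neg hs, hnone s hs]
      rfl
  · rw [if_neg hR]
    refine Finset.sum_eq_zero fun v _ => ?_
    rw [if_neg ?_]
    intro htv
    exact hR (htv ▸ trunc_isSome t v)

lemma sum_negMulLog_inj {ζ ρ : Type} [Fintype ζ] [Fintype ρ] {g : ζ → ρ}
    (hg : Function.Injective g) (d : ζ → ℝ) :
    ∑ r : ρ, Real.negMulLog (∑ z ∈ univ.filter (fun z => g z = r), d z)
      = ∑ z : ζ, Real.negMulLog (d z) := by
  rw [← Finset.sum_fiberwise univ g (fun z => Real.negMulLog (d z))]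
  refine Finset.sum_congr rfl fun r _ => ?_
  rcases Finset.eq_empty_or_nonempty (univ.filter (fun z => g z = r)) with he | ⟨z0, hz0⟩
  · rw [he]; simp
  · have hsing : univ.filter (fun z => g z = r) = {z0} := by
      refine Finset.eq_singleton_iff_unique_mem.mpr ⟨hz0, fun z hz => ?_⟩
      have h1 : g z = r := (Finset.mem_filter.mp hz).2
      have h2 : g z0 = r := (Finset.mem_filter.mp hz0).2
      exact hg (h1.trans h2.symm)
    rw [hsing]; simp

end EII
namespace EII

variable {Ω : Type} [Fintype Ω] {p : Ω → ℝ}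

lemma pr_of_comp {υ : Type} [Fintype υ] (U : Ω → υ) (C : υ → Prop) :
    pr p (fun ω => C (U ω)) = ∑ u ∈ univ.filter C, pr p (fun ω => U ω = u) := by
  rw [pr_split U (fun ω => C (U ω)), Finset.sum_filter]
  refine Finset.sum_congr rfl fun u _ => ?_
  by_cases hu : C u
  · rw [if_pos hu]
    refine pr_congr fun ω => ?_
    exact ⟨fun h => h.2, fun h => ⟨by rw [h]; exact hu, h⟩⟩
  · rw [if_neg hu]
    have : ∀ ω, (C (U ω) ∧ U ω = u) ↔ False := by
      intro ω
      constructor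
      · rintro ⟨h1, h2⟩; rw [h2] at h1; exact hu h1
      · exact False.elim
    rw [pr_congr this]; simp [pr]

lemma pr_comp_and_V {υ σ : Type} [Fintype υ] [Fintype σ] {n : ℕ}
    (U : Ω → υ) (V : Ω → Fin n → σ) (q : σ → ℝ)
    (hfac : ∀ u v, pr p (fun ω => U ω = u ∧ V ω = v)
      = pr p (fun ω => U ω = u) * ∏ s, q (v s))
    (C : υ → Prop) (v : Fin n → σ) :
    pr p (fun ω => C (U ω) ∧ V ω = v)
      = (∏ s, q (v s)) * pr p (fun ω => C (U ω)) := by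
  rw [pr_split U (fun ω => C (U ω) ∧ V ω = v)]
  have hterm : ∀ u, pr p (fun ω => (C (U ω) ∧ V ω = v) ∧ U ω = u)
      = if C u then pr p (fun ω => U ω = u) * ∏ s, q (v s) else 0 := by
    intro u
    by_cases hu : C u
    · rw [if_pos hu, ← hfac u v]
      refine pr_congr fun ω => ?_
      constructor
      · rintro ⟨⟨_, h2⟩, h3⟩; exact ⟨h3, h2⟩
      · rintro ⟨h1, h2⟩; exact ⟨⟨by rw [h1]; exact hu, h2⟩, h1⟩
    · rw [if_neg hu]
      have : ∀ ω, ((C (U ω) ∧ V ω = v) ∧ U ω = u) ↔ False := by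
        intro ω
        constructor
        · rintro ⟨⟨h1, _⟩, h3⟩; rw [h3] at h1; exact hu h1
        · exact False.elim
      rw [pr_congr this]; simp [pr]
  rw [Finset.sum_congr rfl fun u _ => hterm u, pr_of_comp U C, Finset.mul_sum,
    Finset.sum_filter]
  refine Finset.sum_congr rfl fun u _ => ?_
  by_cases hu : C u <;> simp [hu, mul_comm]

lemma pr_comp_and_trunc {υ σ : Type} [Fintype υ] [Fintype σ] [Inhabited σ] {n : ℕ}
    (U : Ω → υ) (V : Ω → Fin n → σ) (q : σ → ℝ) (hq1 : ∑ x, q x = 1)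
    (hfac : ∀ u v, pr p (fun ω => U ω = u ∧ V ω = v)
      = pr p (fun ω => U ω = u) * ∏ s, q (v s))
    (C : υ → Prop) (t : Fin n) (h' : Fin n → Option σ) :
    pr p (fun ω => C (U ω) ∧ trunc t (V ω) = h')
      = (if (∀ s : Fin n, s < t ↔ (h' s).isSome) then ∏ s, (h' s).elim 1 q else 0)
        * pr p (fun ω => C (U ω)) := by
  rw [pr_split V (fun ω => C (U ω) ∧ trunc t (V ω) = h')]
  have hterm : ∀ v, pr p (fun ω => (C (U ω) ∧ trunc t (V ω) = h') ∧ V ω = v)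
      = (if trunc t v = h' then (if True then (1:ℝ) else 0) * ∏ s, q (v s) else 0)
        * pr p (fun ω => C (U ω)) := by
    intro v
    by_cases htv : trunc t v = h'
    · rw [if_pos htv, if_pos trivial, one_mul, ← pr_comp_and_V U V q hfac C v]
      refine pr_congr fun ω => ?_
      constructor
      · rintro ⟨⟨h1, _⟩, h3⟩; exact ⟨h1, h3⟩
      · rintro ⟨h1, h2⟩; exact ⟨⟨h1, by rw [h2, htv]⟩, h2⟩
    · rw [if_neg htv, zero_mul]
      have : ∀ ω, ((C (U ω) ∧ trunc t (V ω) = h') ∧ V ω = v) ↔ False := by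
        intro ω
        constructor
        · rintro ⟨⟨_, h2⟩, h3⟩; rw [h3] at h2; exact htv h2
        · exact False.elim
      rw [pr_congr this]; simp [pr]
  rw [Finset.sum_congr rfl fun v _ => hterm v, ← Finset.sum_mul]
  congr 1
  have h1 := sum_trunc_fiber t q hq1 (fun _ => True) h'
  simpa [hq1] using h1

end EII
namespace EII

variable {Ω : Type} [Fintype Ω] {p : Ω → ℝ}

lemma per_letter {υ ζ μt ρ σ : Type} [Fintype υ] [Fintype ζ] [Fintype μt] [Fintype ρ]
    [Fintype σ] [Inhabited σ] [Nonempty ζ] {n : ℕ}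
    (U : Ω → υ) (V : Ω → Fin n → σ) (q : σ → ℝ) (hq1 : ∑ x, q x = 1)
    (hfac : ∀ u v, pr p (fun ω => U ω = u ∧ V ω = v)
      = pr p (fun ω => U ω = u) * ∏ s, q (v s))
    (t : Fin n)
    (fZ : υ → (Fin n → Option σ) → ζ) (fM : υ → (Fin n → Option σ) → μt)
    (Z : Ω → ζ) (M : Ω → μt)
    (hZ : ∀ ω, Z ω = fZ (U ω) (trunc t (V ω)))
    (hM : ∀ ω, M ω = fM (U ω) (trunc t (V ω)))
    (φ : σ → ζ → ρ) (G : σ → Prop)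
    (hinj : ∀ x, G x → Function.Injective (φ x))
    (hconst : ∀ x, ¬ G x → ∀ z z', φ x z = φ x z') :
    condEnt p (fun ω => φ (V ω t) (Z ω)) (fun ω => (M ω, V ω))
      = (∑ x ∈ univ.filter G, q x) *
        condEnt p Z (fun ω => (M ω, trunc t (V ω))) := by
  -- abbreviations (as plain formulas)
  have hcv : ∀ (mm : μt) (v : Fin n → σ), pr p (fun ω => (M ω, V ω) = (mm, v))
      = (∏ s, q (v s)) * pr p (fun ω => fM (U ω) (trunc t v) = mm) := by
    intro mm v
    rw [← pr_comp_and_V U V q hfac (fun u => fM u (trunc t v) = mm) v]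
    refine pr_congr fun ω => ?_
    constructor
    · intro h
      have h1 : M ω = mm := congrArg Prod.fst h
      have h2 : V ω = v := congrArg Prod.snd h
      exact ⟨by rw [← h2, ← hM ω]; exact h1, h2⟩
    · rintro ⟨h1, h2⟩
      rw [Prod.mk.injEq]
      exact ⟨by rw [hM ω, h2]; exact h1, h2⟩
  have hav : ∀ (r : ρ) (mm : μt) (v : Fin n → σ),
      pr p (fun ω => φ (V ω t) (Z ω) = r ∧ (M ω, V ω) = (mm, v))
      = (∏ s, q (v s)) * pr p (fun ω =>
          φ (v t) (fZ (U ω) (trunc t v)) = r ∧ fM (U ω) (trunc t v) = mm) := by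
    intro r mm v
    rw [← pr_comp_and_V U V q hfac
      (fun u => φ (v t) (fZ u (trunc t v)) = r ∧ fM u (trunc t v) = mm) v]
    refine pr_congr fun ω => ?_
    constructor
    · rintro ⟨h0, h⟩
      have h1 : M ω = mm := congrArg Prod.fst h
      have h2 : V ω = v := congrArg Prod.snd h
      refine ⟨⟨by rw [← h2, ← hZ ω]; exact h0, by rw [← h2, ← hM ω]; exact h1⟩, h2⟩
    · rintro ⟨⟨h0, h1⟩, h2⟩
      refine ⟨by rw [hZ ω, h2]; exact h0, ?_⟩
      rw [Prod.mk.injEq]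
      exact ⟨by rw [hM ω, h2]; exact h1, h2⟩
  -- per-term identity for the LHS
  have hterm : ∀ (mm : μt) (v : Fin n → σ),
      pr p (fun ω => (M ω, V ω) = (mm, v)) * ∑ r, Real.negMulLog
        (pr p (fun ω => φ (V ω t) (Z ω) = r ∧ (M ω, V ω) = (mm, v)) /
          pr p (fun ω => (M ω, V ω) = (mm, v)))
      = ((if G (v t) then (1:ℝ) else 0) * (∏ s, q (v s))) *
          (pr p (fun ω => fM (U ω) (trunc t v) = mm) *
            ∑ z, Real.negMulLog
              (pr p (fun ω => fZ (U ω) (trunc t v) = z ∧ fM (U ω) (trunc t v) = mm) /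
                pr p (fun ω => fM (U ω) (trunc t v) = mm))) := by
    intro mm v
    simp only [hav, hcv]
    by_cases hPv : (∏ s, q (v s)) = 0
    · rw [hPv]; ring
    by_cases hWv : pr p (fun ω => fM (U ω) (trunc t v) = mm) = 0
    · rw [hWv]; simp
    have hdiv : ∀ x : ℝ, ((∏ s, q (v s)) * x) /
        ((∏ s, q (v s)) * pr p (fun ω => fM (U ω) (trunc t v) = mm))
        = x / pr p (fun ω => fM (U ω) (trunc t v) = mm) :=
      fun x => mul_div_mul_left x _ hPv
    simp only [hdiv]
    by_cases hG : G (v t)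
    · rw [if_pos hG]
      have hbr : ∀ r : ρ, pr p (fun ω =>
            φ (v t) (fZ (U ω) (trunc t v)) = r ∧ fM (U ω) (trunc t v) = mm)
          = ∑ z ∈ univ.filter (fun z => φ (v t) z = r),
              pr p (fun ω => fZ (U ω) (trunc t v) = z ∧ fM (U ω) (trunc t v) = mm) := by
        intro r
        rw [pr_congr (fun ω => and_comm)]
        rw [pr_and_comp_eq_sum (fun ω => fM (U ω) (trunc t v))
          (fun ω => fZ (U ω) (trunc t v)) (φ (v t)) mm r]
        exact Finset.sum_congr rfl fun z _ => pr_congr fun ω => and_comm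
      simp only [hbr]
      have hsd : ∀ r : ρ, (∑ z ∈ univ.filter (fun z => φ (v t) z = r),
            pr p (fun ω => fZ (U ω) (trunc t v) = z ∧ fM (U ω) (trunc t v) = mm)) /
            pr p (fun ω => fM (U ω) (trunc t v) = mm)
          = ∑ z ∈ univ.filter (fun z => φ (v t) z = r),
              (pr p (fun ω => fZ (U ω) (trunc t v) = z ∧ fM (U ω) (trunc t v) = mm) /
                pr p (fun ω => fM (U ω) (trunc t v) = mm)) :=
        fun r => Finset.sum_div _ _ _
      simp only [hsd]
      rw [sum_negMulLog_inj (hinj (v t) hG)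
        (fun z => pr p (fun ω => fZ (U ω) (trunc t v) = z ∧ fM (U ω) (trunc t v) = mm) /
          pr p (fun ω => fM (U ω) (trunc t v) = mm))]
      ring
    · rw [if_neg hG]
      have hinner : (∑ r : ρ, Real.negMulLog
          (pr p (fun ω => φ (v t) (fZ (U ω) (trunc t v)) = r ∧ fM (U ω) (trunc t v) = mm) /
            pr p (fun ω => fM (U ω) (trunc t v) = mm))) = 0 := by
        refine Finset.sum_eq_zero fun r _ => ?_
        rcases (inferInstance : Nonempty ζ) with ⟨z0⟩
        by_cases hr : φ (v t) z0 = r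
        · have he : pr p (fun ω => φ (v t) (fZ (U ω) (trunc t v)) = r ∧
              fM (U ω) (trunc t v) = mm) = pr p (fun ω => fM (U ω) (trunc t v) = mm) := by
            refine pr_congr fun ω => ?_
            constructor
            · exact fun h => h.2
            · exact fun h => ⟨by rw [hconst (v t) hG (fZ (U ω) (trunc t v)) z0]; exact hr, h⟩
          rw [he, div_self hWv]
          simp
        · have he : pr p (fun ω => φ (v t) (fZ (U ω) (trunc t v)) = r ∧
              fM (U ω) (trunc t v) = mm) = 0 := by
            have h0 : ∀ ω, (φ (v t) (fZ (U ω) (trunc t v)) = r ∧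
                fM (U ω) (trunc t v) = mm) ↔ False := by
              intro ω
              constructor
              · rintro ⟨h1, _⟩
                rw [hconst (v t) hG (fZ (U ω) (trunc t v)) z0] at h1
                exact hr h1
              · exact False.elim
            rw [pr_congr h0]; simp [pr]
          rw [he]
          simp
      rw [hinner]
      ring
  -- per-term identity for the RHS
  have hc' : ∀ (mm : μt) (h' : Fin n → Option σ),
      pr p (fun ω => (M ω, trunc t (V ω)) = (mm, h'))
      = (if (∀ s : Fin n, s < t ↔ (h' s).isSome) then ∏ s, (h' s).elim 1 q else 0) *
          pr p (fun ω => fM (U ω) h' = mm) := by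
    intro mm h'
    rw [← pr_comp_and_trunc U V q hq1 hfac (fun u => fM u h' = mm) t h']
    refine pr_congr fun ω => ?_
    constructor
    · intro h
      have h1 : M ω = mm := congrArg Prod.fst h
      have h2 : trunc t (V ω) = h' := congrArg Prod.snd h
      exact ⟨by rw [← h2, ← hM ω]; exact h1, h2⟩
    · rintro ⟨h1, h2⟩
      rw [Prod.mk.injEq]
      exact ⟨by rw [hM ω, h2]; exact h1, h2⟩
  have ha' : ∀ (z : ζ) (mm : μt) (h' : Fin n → Option σ),
      pr p (fun ω => Z ω = z ∧ (M ω, trunc t (V ω)) = (mm, h'))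
      = (if (∀ s : Fin n, s < t ↔ (h' s).isSome) then ∏ s, (h' s).elim 1 q else 0) *
          pr p (fun ω => fZ (U ω) h' = z ∧ fM (U ω) h' = mm) := by
    intro z mm h'
    rw [← pr_comp_and_trunc U V q hq1 hfac (fun u => fZ u h' = z ∧ fM u h' = mm) t h']
    refine pr_congr fun ω => ?_
    constructor
    · rintro ⟨h0, h⟩
      have h1 : M ω = mm := congrArg Prod.fst h
      have h2 : trunc t (V ω) = h' := congrArg Prod.snd h
      exact ⟨⟨by rw [← h2, ← hZ ω]; exact h0, by rw [← h2, ← hM ω]; exact h1⟩, h2⟩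
    · rintro ⟨⟨h0, h1⟩, h2⟩
      refine ⟨by rw [hZ ω, h2]; exact h0, ?_⟩
      rw [Prod.mk.injEq]
      exact ⟨by rw [hM ω, h2]; exact h1, h2⟩
  have hterm2 : ∀ (mm : μt) (h' : Fin n → Option σ),
      pr p (fun ω => (M ω, trunc t (V ω)) = (mm, h')) * ∑ z, Real.negMulLog
        (pr p (fun ω => Z ω = z ∧ (M ω, trunc t (V ω)) = (mm, h')) /
          pr p (fun ω => (M ω, trunc t (V ω)) = (mm, h')))
      = (if (∀ s : Fin n, s < t ↔ (h' s).isSome) then ∏ s, (h' s).elim 1 q else 0) *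
          (pr p (fun ω => fM (U ω) h' = mm) *
            ∑ z, Real.negMulLog
              (pr p (fun ω => fZ (U ω) h' = z ∧ fM (U ω) h' = mm) /
                pr p (fun ω => fM (U ω) h' = mm))) := by
    intro mm h'
    simp only [hc', ha']
    by_cases hR : ∀ s : Fin n, s < t ↔ (h' s).isSome
    · rw [if_pos hR]
      by_cases hPl : (∏ s, (h' s).elim 1 q) = 0
      · rw [hPl]; ring
      by_cases hWv : pr p (fun ω => fM (U ω) h' = mm) = 0
      · rw [hWv]; simp
      have hdiv : ∀ x : ℝ, ((∏ s, (h' s).elim 1 q) * x) /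
          ((∏ s, (h' s).elim 1 q) * pr p (fun ω => fM (U ω) h' = mm))
          = x / pr p (fun ω => fM (U ω) h' = mm) :=
        fun x => mul_div_mul_left x _ hPl
      simp only [hdiv]
      ring
    · rw [if_neg hR]
      ring
  ----------------------------------------------------------------
  -- assemble
  unfold condEnt
  rw [Fintype.sum_prod_type, Fintype.sum_prod_type]
  simp only [hterm, hterm2]
  rw [Finset.sum_comm]
  conv_rhs => rw [Finset.sum_comm]
  -- LHS : ∑ v, ∑ mm, ... ; RHS : qG * ∑ h', ∑ mm, ...
  have hvsum : ∀ v : Fin n → σ,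
      (∑ mm : μt, ((if G (v t) then (1:ℝ) else 0) * (∏ s, q (v s))) *
        (pr p (fun ω => fM (U ω) (trunc t v) = mm) *
          ∑ z, Real.negMulLog
            (pr p (fun ω => fZ (U ω) (trunc t v) = z ∧ fM (U ω) (trunc t v) = mm) /
              pr p (fun ω => fM (U ω) (trunc t v) = mm))))
      = ((if G (v t) then (1:ℝ) else 0) * (∏ s, q (v s))) *
          (∑ mm : μt, pr p (fun ω => fM (U ω) (trunc t v) = mm) *
            ∑ z, Real.negMulLog
              (pr p (fun ω => fZ (U ω) (trunc t v) = z ∧ fM (U ω) (trunc t v) = mm) /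
                pr p (fun ω => fM (U ω) (trunc t v) = mm))) :=
    fun v => (Finset.mul_sum _ _ _).symm
  simp only [hvsum]
  rw [← Finset.sum_fiberwise univ (trunc t) (fun v =>
    ((if G (v t) then (1:ℝ) else 0) * (∏ s, q (v s))) *
      (∑ mm : μt, pr p (fun ω => fM (U ω) (trunc t v) = mm) *
        ∑ z, Real.negMulLog
          (pr p (fun ω => fZ (U ω) (trunc t v) = z ∧ fM (U ω) (trunc t v) = mm) /
            pr p (fun ω => fM (U ω) (trunc t v) = mm))))]
  rw [Finset.mul_sum]
  refine Finset.sum_congr rfl fun h' _ => ?_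
  -- per h' : group the fiber
  have hfib : ∀ v ∈ univ.filter (fun v => trunc t v = h'),
      ((if G (v t) then (1:ℝ) else 0) * (∏ s, q (v s))) *
        (∑ mm : μt, pr p (fun ω => fM (U ω) (trunc t v) = mm) *
          ∑ z, Real.negMulLog
            (pr p (fun ω => fZ (U ω) (trunc t v) = z ∧ fM (U ω) (trunc t v) = mm) /
              pr p (fun ω => fM (U ω) (trunc t v) = mm)))
      = ((if G (v t) then (1:ℝ) else 0) * (∏ s, q (v s))) *
          (∑ mm : μt, pr p (fun ω => fM (U ω) h' = mm) *
            ∑ z, Real.negMulLog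
              (pr p (fun ω => fZ (U ω) h' = z ∧ fM (U ω) h' = mm) /
                pr p (fun ω => fM (U ω) h' = mm))) := by
    intro v hv
    rw [(Finset.mem_filter.mp hv).2]
  rw [Finset.sum_congr rfl hfib, ← Finset.sum_mul, Finset.sum_filter]
  rw [sum_trunc_fiber t q hq1 G h']
  by_cases hR : ∀ s : Fin n, s < t ↔ (h' s).isSome
  · rw [if_pos hR, if_pos hR]
    conv_rhs => rw [← Finset.mul_sum]
    ring
  · rw [if_neg hR, if_neg hR]
    simp

end EII
namespace EII

variable {Ω : Type} [Fintype Ω] {p : Ω → ℝ}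

/-- truncation below an absolute time `k : ℕ` -/
def truncN {β : Type} {n : ℕ} (k : ℕ) (f : Fin n → β) : Fin n → Option β :=
  fun s => if (s : ℕ) < k then some (f s) else none

lemma condEnt_mono_cond' {α β β' : Type} [Fintype α] [Fintype β] [Fintype β']
    (hp : ∀ ω, 0 ≤ p ω) (X : Ω → α) {Y : Ω → β} {Y' : Ω → β'} (g : β → β')
    (hg : ∀ ω, Y' ω = g (Y ω)) : condEnt p X Y ≤ condEnt p X Y' := by
  have h := condEnt_mono_cond hp X Y g
  have e : (fun ω => g (Y ω)) = Y' := funext fun ω => (hg ω).symm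
  rwa [e] at h

lemma claim2_core {υ μ2 σ βa βb : Type} [Fintype υ] [Fintype μ2] [Fintype σ]
    [Fintype βa] [Fintype βb] [Inhabited σ] (da : βa) (db : βb) {n : ℕ}
    (hp : ∀ ω, 0 ≤ p ω)
    (U : Ω → υ) (V : Ω → Fin n → σ) (Wc : υ → μ2)
    (q : σ → ℝ) (hq0 : ∀ x, 0 ≤ q x) (hq1 : ∑ x, q x = 1)
    (hfac : ∀ u v, pr p (fun ω => U ω = u ∧ V ω = v)
      = pr p (fun ω => U ω = u) * ∏ s, q (v s))
    (Xf : Fin n → Ω → ZMod 2)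
    (Xfun : Fin n → υ → (Fin n → Option σ) → ZMod 2)
    (hXf : ∀ (t : Fin n) ω, Xf t ω = Xfun t (U ω) (trunc t (V ω)))
    (φa : σ → ZMod 2 → βa) (Ga : σ → Prop)
    (hinja : ∀ x, Ga x → Function.Injective (φa x))
    (hconsta : ∀ x, ¬ Ga x → ∀ z z', φa x z = φa x z')
    (φb : σ → ZMod 2 → βb) (Gb : σ → Prop)
    (hinjb : ∀ x, Gb x → Function.Injective (φb x))
    (hconstb : ∀ x, ¬ Gb x → ∀ z z', φb x z = φb x z')
    (ψ : βa → βb) (hba : ∀ s z, φb s z = ψ (φa s z))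
    (k : ℕ) (hk : k ≤ n) :
    (∑ x ∈ univ.filter Gb, q x) *
      condEnt p (fun ω => truncN k (fun t : Fin n => φa (V ω t) (Xf t ω)))
        (fun ω => (Wc (U ω), V ω))
    ≤ (∑ x ∈ univ.filter Ga, q x) *
      condEnt p (fun ω => truncN k (fun t : Fin n => φb (V ω t) (Xf t ω)))
        (fun ω => (Wc (U ω), V ω)) := by
  induction k with
  | zero =>
    have ea : (fun ω => truncN 0 (fun t : Fin n => φa (V ω t) (Xf t ω)))
        = (fun _ => (fun _ => none : Fin n → Option βa)) := by
      funext ω s; simp [truncN]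
    have eb : (fun ω => truncN 0 (fun t : Fin n => φb (V ω t) (Xf t ω)))
        = (fun _ => (fun _ => none : Fin n → Option βb)) := by
      funext ω s; simp [truncN]
    rw [ea, eb, condEnt_const hp, condEnt_const hp]
    simp
  | succ k ih =>
    have hkn : k < n := hk
    have ihk := ih (le_of_lt hkn)
    set t : Fin n := ⟨k, hkn⟩ with ht
    -- generic chain step
    have chain_step : ∀ {β : Type} [Fintype β] (dβ : β) (φc : σ → ZMod 2 → β),
        condEnt p (fun ω => truncN (k+1) (fun t' : Fin n => φc (V ω t') (Xf t' ω)))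
          (fun ω => (Wc (U ω), V ω))
        = condEnt p (fun ω => truncN k (fun t' : Fin n => φc (V ω t') (Xf t' ω)))
            (fun ω => (Wc (U ω), V ω))
          + condEnt p (fun ω => φc (V ω t) (Xf t ω))
              (fun ω => (truncN k (fun t' : Fin n => φc (V ω t') (Xf t' ω)),
                (Wc (U ω), V ω))) := by
      intro β _ dβ φc
      have e1 : condEnt p
            (fun ω => truncN (k+1) (fun t' : Fin n => φc (V ω t') (Xf t' ω)))
            (fun ω => (Wc (U ω), V ω))
          = condEnt p (fun ω => (φc (V ω t) (Xf t ω),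
              truncN k (fun t' : Fin n => φc (V ω t') (Xf t' ω))))
            (fun ω => (Wc (U ω), V ω)) := by
        refine condEnt_congrX hp _
          (fun hfun => ((hfun t).getD dβ,
            fun s : Fin n => if (s : ℕ) < k then hfun s else none))
          (fun pr => fun s : Fin n => if (s : ℕ) < k then pr.2 s
            else if (s : ℕ) = k then some pr.1 else none) ?_ ?_
        · intro ω
          have c1 : (truncN (k+1) (fun t' : Fin n => φc (V ω t') (Xf t' ω)) t).getD dβ
              = φc (V ω t) (Xf t ω) := by
            have : ((t : Fin n) : ℕ) < k + 1 := Nat.lt_succ_of_le (le_of_eq rfl)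
            simp [truncN, this]
          have c2 : (fun s : Fin n => if (s : ℕ) < k then
                truncN (k+1) (fun t' : Fin n => φc (V ω t') (Xf t' ω)) s else none)
              = truncN k (fun t' : Fin n => φc (V ω t') (Xf t' ω)) := by
            funext s
            by_cases hs : (s : ℕ) < k
            · simp [truncN, hs, Nat.lt_succ_of_lt hs]
            · simp [truncN, hs]
          show (φc (V ω t) (Xf t ω), truncN k _) = (_, _)
          rw [c1, c2]
        · intro ω
          funext s
          show truncN (k+1) (fun t' : Fin n => φc (V ω t') (Xf t' ω)) s
            = if (s : ℕ) < k then truncN k (fun t' : Fin n => φc (V ω t') (Xf t' ω)) s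
              else if (s : ℕ) = k then some (φc (V ω t) (Xf t ω)) else none
          by_cases hs : (s : ℕ) < k
          · simp [truncN, hs, Nat.lt_succ_of_lt hs]
          · by_cases hsk : (s : ℕ) = k
            · have hst : s = t := Fin.ext hsk
              have : (s : ℕ) < k + 1 := by omega
              simp [truncN, hs, hsk, hst, this, show (t : ℕ) = k from rfl]
            · have : ¬ (s : ℕ) < k + 1 := by omega
              simp [truncN, hs, hsk, this]
      rw [e1, condEnt_chain hp]
    -- generic per-letter step
    have pl_step : ∀ {β : Type} [Fintype β] (dβ : β) (φc : σ → ZMod 2 → β)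
        (Gc : σ → Prop) (_ : ∀ x, Gc x → Function.Injective (φc x))
        (_ : ∀ x, ¬ Gc x → ∀ z z', φc x z = φc x z'),
        condEnt p (fun ω => φc (V ω t) (Xf t ω))
          (fun ω => (truncN k (fun t' : Fin n => φc (V ω t') (Xf t' ω)),
            (Wc (U ω), V ω)))
        = (∑ x ∈ univ.filter Gc, q x) *
            condEnt p (Xf t)
              (fun ω => ((truncN k (fun t' : Fin n => φc (V ω t') (Xf t' ω)), Wc (U ω)),
                trunc t (V ω))) := by
      intro β _ dβ φc Gc hinjc hconstc
      have ec : condEnt p (fun ω => φc (V ω t) (Xf t ω))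
          (fun ω => (truncN k (fun t' : Fin n => φc (V ω t') (Xf t' ω)), (Wc (U ω), V ω)))
          = condEnt p (fun ω => φc (V ω t) (Xf t ω))
            (fun ω => ((truncN k (fun t' : Fin n => φc (V ω t') (Xf t' ω)), Wc (U ω)), V ω)) :=
        condEnt_congr_cond hp _ (fun z => ((z.1, z.2.1), z.2.2))
          (fun z => (z.1.1, (z.1.2, z.2))) (fun ω => rfl) (fun ω => rfl)
      rw [ec]
      refine per_letter U V q hq1 hfac t (Xfun t)
        (fun u h => ((fun s : Fin n => if (s : ℕ) < k then
            some (φc ((h s).getD default)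
              (Xfun s u (fun r => if r < s then h r else none))) else none), Wc u))
        (Xf t) _ (hXf t) ?_ φc Gc hinjc hconstc
      intro ω
      have hfst : truncN k (fun t' : Fin n => φc (V ω t') (Xf t' ω))
          = fun s : Fin n => if (s : ℕ) < k then
              some (φc ((trunc t (V ω) s).getD default)
                (Xfun s (U ω) (fun r => if r < s then trunc t (V ω) r else none))) else none := by
        funext s
        by_cases hs : (s : ℕ) < k
        · have hst : s < t := by
            rw [Fin.lt_def]; exact hs
          have e1 : trunc t (V ω) s = some (V ω s) := if_pos hst
          have e2 : (fun r : Fin n => if r < s then trunc t (V ω) r else none)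
              = trunc s (V ω) := by
            funext r
            by_cases hr : r < s
            · rw [if_pos hr]
              unfold trunc
              rw [if_pos (lt_trans hr hst), if_pos hr]
            · rw [if_neg hr]
              unfold trunc
              rw [if_neg hr]
          simp only [truncN]
          rw [if_pos hs, if_pos hs, e1, e2]
          rw [Option.getD_some, ← hXf s ω]
        · simp only [truncN]
          rw [if_neg hs, if_neg hs]
      show (truncN k _, Wc (U ω)) = (_, _)
      rw [hfst]
    -- assemble the two sides
    rw [chain_step da φa, chain_step db φb,
      pl_step da φa Ga hinja hconsta, pl_step db φb Gb hinjb hconstb]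
    -- conditioning reduction
    have hred : condEnt p (Xf t)
        (fun ω => ((truncN k (fun t' : Fin n => φa (V ω t') (Xf t' ω)), Wc (U ω)),
          trunc t (V ω)))
        ≤ condEnt p (Xf t)
          (fun ω => ((truncN k (fun t' : Fin n => φb (V ω t') (Xf t' ω)), Wc (U ω)),
            trunc t (V ω))) := by
      refine condEnt_mono_cond' hp (Xf t)
        (fun z : ((Fin n → Option βa) × μ2) × (Fin n → Option σ) =>
          ((fun s : Fin n => Option.map ψ (z.1.1 s), z.1.2), z.2)) ?_
      intro ω
      show ((truncN k (fun t' : Fin n => φb (V ω t') (Xf t' ω)), Wc (U ω)), trunc t (V ω))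
        = ((fun s : Fin n => Option.map ψ
            (truncN k (fun t' : Fin n => φa (V ω t') (Xf t' ω)) s), Wc (U ω)), trunc t (V ω))
      have e : (fun s : Fin n => Option.map ψ
            (truncN k (fun t' : Fin n => φa (V ω t') (Xf t' ω)) s))
          = truncN k (fun t' : Fin n => φb (V ω t') (Xf t' ω)) := by
        funext s
        by_cases hs : (s : ℕ) < k
        · simp [truncN, hs, hba]
        · simp [truncN, hs]
      rw [e]
    have hGa0 : (0:ℝ) ≤ ∑ x ∈ univ.filter Ga, q x :=
      Finset.sum_nonneg fun x _ => hq0 x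
    have hGb0 : (0:ℝ) ≤ ∑ x ∈ univ.filter Gb, q x :=
      Finset.sum_nonneg fun x _ => hq0 x
    have h3 := mul_le_mul_of_nonneg_left hred (mul_nonneg hGb0 hGa0)
    ring_nf at h3 ihk ⊢
    linarith

end EII

open EII

/-- Claim 2 of the paper (the n-letter extremal entropy inequality):
for messages `W1, W2`, an i.i.d. state process `(S1[t],S2[t],F[t])` independent of the
messages, channel inputs `X[t]` that are deterministic functions of the messages and
strictly past states, and outputs `Yi[t] = Si[t]·X[t]`, one has
`H[Y1^n | (W2, S^n, F^n)] ≤ β2 · H[Y2^n | (W2, S^n, F^n)]`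
where `β2 = (1 − P(S1=0,S2=0)) / (1 − P(S2=0))`. -/
theorem n_letter_extremal_entropy_inequality
    {Ω α1 α2 γ : Type} [Fintype Ω] [Fintype α1] [Fintype α2] [Fintype γ]
    (p : Ω → ℝ) (hp : ∀ ω, 0 ≤ p ω) (hsum : ∑ ω, p ω = 1)
    (n : ℕ) (hn : 0 < n)
    (W1 : Ω → α1) (W2 : Ω → α2)
    (S1 S2 : Ω → Fin n → Bool) (F : Ω → Fin n → γ)
    (X : Fin n → Ω → ZMod 2)
    -- the state triples are i.i.d. across time
    (hiid : ∀ v : Fin n → Bool × Bool × γ,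
      pr p (fun ω => ∀ t, (S1 ω t, S2 ω t, F ω t) = v t)
        = ∏ t, pr p (fun ω => (S1 ω ⟨0, hn⟩, S2 ω ⟨0, hn⟩, F ω ⟨0, hn⟩) = v t))
    -- the entire state process is independent of the messages (W1, W2)
    (hindep : ∀ (v : Fin n → Bool × Bool × γ) (w1 : α1) (w2 : α2),
      pr p (fun ω => (∀ t, (S1 ω t, S2 ω t, F ω t) = v t) ∧ W1 ω = w1 ∧ W2 ω = w2)
        = pr p (fun ω => ∀ t, (S1 ω t, S2 ω t, F ω t) = v t) *
          pr p (fun ω => W1 ω = w1 ∧ W2 ω = w2))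
    -- X[t] is a deterministic function of the messages and strictly past states
    (henc : ∀ t : Fin n,
      ∃ f : α1 → α2 → ({s : Fin n // s < t} → Bool × Bool × γ) → ZMod 2,
      ∀ ω, X t ω = f (W1 ω) (W2 ω) (fun s => (S1 ω s.1, S2 ω s.1, F ω s.1)))
    (δ2 p00 : ℝ)
    (hδ2 : pr p (fun ω => S2 ω ⟨0, hn⟩ = false) = δ2) (hδ2lt : δ2 < 1)
    (hp00 : pr p (fun ω => S1 ω ⟨0, hn⟩ = false ∧ S2 ω ⟨0, hn⟩ = false) = p00) :
    condEnt p (fun ω => fun t : Fin n => (if S1 ω t then X t ω else 0 : ZMod 2))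
        (fun ω => (W2 ω, fun t : Fin n => (S1 ω t, S2 ω t, F ω t)))
      ≤ ((1 - p00) / (1 - δ2)) *
        condEnt p (fun ω => fun t : Fin n => (if S2 ω t then X t ω else 0 : ZMod 2))
          (fun ω => (W2 ω, fun t : Fin n => (S1 ω t, S2 ω t, F ω t))) := by
  classical
  have hΩ : Nonempty Ω := by
    by_contra h
    rw [not_nonempty_iff] at h
    rw [Finset.univ_eq_empty, Finset.sum_empty] at hsum
    exact one_ne_zero hsum.symm
  obtain ⟨ω₀⟩ := hΩ
  haveI : Inhabited (Bool × Bool × γ) := ⟨(S1 ω₀ ⟨0, hn⟩, S2 ω₀ ⟨0, hn⟩, F ω₀ ⟨0, hn⟩)⟩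
  set V : Ω → Fin n → Bool × Bool × γ := fun ω t => (S1 ω t, S2 ω t, F ω t) with hV
  set U : Ω → α1 × α2 := fun ω => (W1 ω, W2 ω) with hU
  set q : Bool × Bool × γ → ℝ :=
    fun s => pr p (fun ω => (S1 ω ⟨0, hn⟩, S2 ω ⟨0, hn⟩, F ω ⟨0, hn⟩) = s) with hq
  have hq1 : ∑ s, q s = 1 := by
    have h1 := pr_split (p := p) (fun ω => (S1 ω ⟨0, hn⟩, S2 ω ⟨0, hn⟩, F ω ⟨0, hn⟩))
      (fun _ => True)
    rw [pr_true hsum] at h1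
    rw [hq]
    rw [h1]
    exact Finset.sum_congr rfl fun s _ => pr_congr fun ω => by simp
  have hfac : ∀ (u : α1 × α2) (v : Fin n → Bool × Bool × γ),
      pr p (fun ω => U ω = u ∧ V ω = v)
        = pr p (fun ω => U ω = u) * ∏ s, q (v s) := by
    intro u v
    have e1 : pr p (fun ω => U ω = u ∧ V ω = v)
        = pr p (fun ω => (∀ t, (S1 ω t, S2 ω t, F ω t) = v t) ∧ W1 ω = u.1 ∧ W2 ω = u.2) := by
      refine pr_congr fun ω => ?_
      constructor
      · rintro ⟨h1, h2⟩
        exact ⟨fun t => congrFun h2 t, congrArg Prod.fst h1, congrArg Prod.snd h1⟩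
      · rintro ⟨h1, h2, h3⟩
        refine ⟨?_, funext h1⟩
        show (W1 ω, W2 ω) = u
        rw [h2, h3]
    rw [e1, hindep v u.1 u.2, hiid v]
    have e2 : pr p (fun ω => W1 ω = u.1 ∧ W2 ω = u.2) = pr p (fun ω => U ω = u) := by
      refine pr_congr fun ω => ?_
      constructor
      · rintro ⟨h1, h2⟩
        show (W1 ω, W2 ω) = u
        rw [h1, h2]
      · intro h1
        exact ⟨congrArg Prod.fst h1, congrArg Prod.snd h1⟩
    rw [e2]
    exact mul_comm _ _
  -- masses of the two decodable sets
  have hq2 : ∑ s ∈ univ.filter (fun s : Bool × Bool × γ => s.2.1 = true), q s = 1 - δ2 := by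
    have hsplit := Finset.sum_filter_add_sum_filter_not univ
      (fun s : Bool × Bool × γ => s.2.1 = true) q
    rw [hq1] at hsplit
    have hcompl : ∑ s ∈ univ.filter (fun s : Bool × Bool × γ => ¬ s.2.1 = true), q s = δ2 := by
      have h1 := pr_of_comp (p := p) (fun ω => (S1 ω ⟨0, hn⟩, S2 ω ⟨0, hn⟩, F ω ⟨0, hn⟩))
          (fun s => ¬ s.2.1 = true)
      have h2 : pr p (fun ω => ¬ (S1 ω ⟨0, hn⟩, S2 ω ⟨0, hn⟩, F ω ⟨0, hn⟩).2.1 = true)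
          = δ2 := by
        rw [← hδ2]
        exact pr_congr fun ω => by simp
      rw [← h2, h1]
      refine Finset.sum_congr ?_ fun s _ => rfl
      ext s
      simp [Finset.mem_filter]
    linarith
  have hq00 : ∑ s ∈ univ.filter
      (fun s : Bool × Bool × γ => s.1 = true ∨ s.2.1 = true), q s = 1 - p00 := by
    have hsplit := Finset.sum_filter_add_sum_filter_not univ
      (fun s : Bool × Bool × γ => s.1 = true ∨ s.2.1 = true) q
    rw [hq1] at hsplit
    have hcompl : ∑ s ∈ univ.filter
        (fun s : Bool × Bool × γ => ¬ (s.1 = true ∨ s.2.1 = true)), q s = p00 := by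
      have h1 := pr_of_comp (p := p) (fun ω => (S1 ω ⟨0, hn⟩, S2 ω ⟨0, hn⟩, F ω ⟨0, hn⟩))
          (fun s => ¬ (s.1 = true ∨ s.2.1 = true))
      have h2 : pr p (fun ω => ¬ ((S1 ω ⟨0, hn⟩, S2 ω ⟨0, hn⟩, F ω ⟨0, hn⟩).1 = true ∨
            (S1 ω ⟨0, hn⟩, S2 ω ⟨0, hn⟩, F ω ⟨0, hn⟩).2.1 = true)) = p00 := by
        rw [← hp00]
        refine pr_congr fun ω => ?_
        constructor
        · intro h
          push_neg at h
          simp at h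
          exact h
        · rintro ⟨ha, hb⟩
          push_neg
          simp [ha, hb]
      rw [← h2, h1]
      refine Finset.sum_congr ?_ fun s _ => rfl
      ext s
      simp [Finset.mem_filter]
    linarith
  -- instance-independent versions of the mass identities
  have hq2' : ∀ inst : DecidablePred (fun s : Bool × Bool × γ => s.2.1 = true),
      ∑ s ∈ @Finset.filter _ _ inst univ, q s = 1 - δ2 := by
    intro inst
    rw [← hq2]
    refine Finset.sum_congr ?_ fun s _ => rfl
    ext s; simp
  have hq00' : ∀ inst : DecidablePred
      (fun s : Bool × Bool × γ => s.1 = true ∨ s.2.1 = true),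
      ∑ s ∈ @Finset.filter _ _ inst univ, q s = 1 - p00 := by
    intro inst
    rw [← hq00]
    refine Finset.sum_congr ?_ fun s _ => rfl
    ext s; simp
  -- the encoder as a function of the message pair and the strict past
  have hXf : ∀ (t : Fin n) (ω : Ω), X t ω
      = Classical.choose (henc t) (U ω).1 (U ω).2
          (fun s : {s : Fin n // s < t} => ((trunc t (V ω) s.1).getD default)) := by
    intro t ω
    rw [Classical.choose_spec (henc t) ω]
    have e : (fun s : {s : Fin n // s < t} => (S1 ω s.1, S2 ω s.1, F ω s.1))
        = (fun s : {s : Fin n // s < t} => ((trunc t (V ω) s.1).getD default)) := by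
      funext s
      have e1 : trunc t (V ω) s.1 = some (V ω s.1) := if_pos s.2
      rw [e1]
      rfl
    rw [e]
  -- injectivity / constancy of the two output maps
  have hinjJ : ∀ s : Bool × Bool × γ, (s.1 = true ∨ s.2.1 = true) →
      Function.Injective (fun x : ZMod 2 =>
        ((if s.1 then x else 0 : ZMod 2), (if s.2.1 then x else 0 : ZMod 2))) := by
    intro s hs x y hxy
    rcases hs with h | h
    · have h1 := congrArg Prod.fst hxy
      simpa [h] using h1
    · have h1 := congrArg Prod.snd hxy
      simpa [h] using h1
  have hconstJ : ∀ s : Bool × Bool × γ, ¬ (s.1 = true ∨ s.2.1 = true) →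
      ∀ z z' : ZMod 2,
        (fun x : ZMod 2 => ((if s.1 then x else 0 : ZMod 2),
          (if s.2.1 then x else 0 : ZMod 2))) z
        = (fun x : ZMod 2 => ((if s.1 then x else 0 : ZMod 2),
          (if s.2.1 then x else 0 : ZMod 2))) z' := by
    intro s hs z z'
    push_neg at hs
    simp only [hs.1, hs.2]
    simp
  have hinj2 : ∀ s : Bool × Bool × γ, s.2.1 = true →
      Function.Injective (fun x : ZMod 2 => (if s.2.1 then x else 0 : ZMod 2)) := by
    intro s h x y hxy
    simpa [h] using hxy
  have hconst2 : ∀ s : Bool × Bool × γ, ¬ s.2.1 = true →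
      ∀ z z' : ZMod 2,
        (fun x : ZMod 2 => (if s.2.1 then x else 0 : ZMod 2)) z
        = (fun x : ZMod 2 => (if s.2.1 then x else 0 : ZMod 2)) z' := by
    intro s h z z'
    simp [h]
  -- the core inequality at k = n
  have hcore := claim2_core (p := p) ((0 : ZMod 2), (0 : ZMod 2)) (0 : ZMod 2) hp U V
    Prod.snd q (fun s => pr_nonneg hp _) hq1 hfac X
    (fun t u h => Classical.choose (henc t) u.1 u.2
      (fun s : {s : Fin n // s < t} => ((h s.1).getD default)))
    hXf
    (fun s x => ((if s.1 then x else 0 : ZMod 2), (if s.2.1 then x else 0 : ZMod 2)))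
    (fun s => s.1 = true ∨ s.2.1 = true) hinjJ hconstJ
    (fun s x => (if s.2.1 then x else 0 : ZMod 2)) (fun s => s.2.1 = true) hinj2 hconst2
    Prod.snd (fun s z => rfl) n le_rfl
  rw [hq2' _, hq00' _] at hcore
  -- drop the trivial truncation at level n
  have etrN : ∀ {β : Type} [Fintype β] (dβ : β) (Yt : Fin n → Ω → β),
      condEnt p (fun ω => truncN n (fun t : Fin n => Yt t ω)) (fun ω => ((U ω).2, V ω))
      = condEnt p (fun ω => (fun t : Fin n => Yt t ω)) (fun ω => ((U ω).2, V ω)) := by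
    intro β _ dβ Yt
    refine condEnt_congrX hp _ (fun h => fun s : Fin n => (h s).getD dβ)
      (fun g => truncN n g) ?_ ?_
    · intro ω
      funext s
      show Yt s ω = (truncN n (fun t : Fin n => Yt t ω) s).getD dβ
      have e : truncN n (fun t : Fin n => Yt t ω) s = some (Yt s ω) := if_pos s.isLt
      rw [e]
      rfl
    · intro ω
      rfl
  rw [etrN ((0 : ZMod 2), (0 : ZMod 2))
      (fun (t : Fin n) (ω : Ω) => ((if (V ω t).1 then X t ω else 0 : ZMod 2),
        (if (V ω t).2.1 then X t ω else 0 : ZMod 2))),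
    etrN (0 : ZMod 2)
      (fun (t : Fin n) (ω : Ω) => (if (V ω t).2.1 then X t ω else 0 : ZMod 2))] at hcore
  -- compare Y1 with the joint output
  have hY1le : condEnt p
      (fun ω => fun t : Fin n => (if (V ω t).1 then X t ω else 0 : ZMod 2))
      (fun ω => ((U ω).2, V ω))
      ≤ condEnt p
        (fun ω => fun t : Fin n => ((if (V ω t).1 then X t ω else 0 : ZMod 2),
          (if (V ω t).2.1 then X t ω else 0 : ZMod 2)))
        (fun ω => ((U ω).2, V ω)) :=
    condEnt_comp_le hp
      (fun ω => fun t : Fin n => ((if (V ω t).1 then X t ω else 0 : ZMod 2),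
        (if (V ω t).2.1 then X t ω else 0 : ZMod 2)))
      (fun ω => ((U ω).2, V ω))
      (fun g => fun t : Fin n => (g t).1)
  -- divide through
  have h1δ : (0:ℝ) < 1 - δ2 := by linarith
  have final2 : condEnt p
      (fun ω => fun t : Fin n => ((if (V ω t).1 then X t ω else 0 : ZMod 2),
        (if (V ω t).2.1 then X t ω else 0 : ZMod 2)))
      (fun ω => ((U ω).2, V ω))
      ≤ ((1 - p00) / (1 - δ2)) * condEnt p
        (fun ω => fun t : Fin n => (if (V ω t).2.1 then X t ω else 0 : ZMod 2))
        (fun ω => ((U ω).2, V ω)) := by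
    rw [div_mul_eq_mul_div, le_div_iff₀ h1δ]
    nlinarith [hcore]
  exact le_trans hY1le final2
end
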